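/- arXiv:2502.18096 — 3 statements merged into one kernel-verified Lean document; each statement's English description precedes it below -/
import Mathlib

section
/- Branching rule for the idempotents: if V is a standard barred tableau with n−1 boxes, then in the Sergeev superalgebra S_n one has e_V = Σ_W e_W, where the sum runs over all standard barred tableaux W with n boxes obtained from V by adding one box containing the entry n or n̄ (here e_V is computed in S_{n−1}, viewed inside S_n via the natural inclusion sending t_a ↦ t_a, c_a ↦ c_a). -/
open scoped Classical

noncomputable section

/-- Generators of the Sergeev superalgebra: `T a` for `1 ≤ a ≤ n-1`, `C a` for `1 ≤ a ≤ n`. -/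
inductive SGen (n : ℕ) : Type
  | T : {a : ℕ // 1 ≤ a ∧ a < n} → SGen n
  | C : {a : ℕ // 1 ≤ a ∧ a ≤ n} → SGen n

/-- The generator `t_a` in the free algebra (junk value `0` outside the valid range). -/
def tf (n a : ℕ) : FreeAlgebra ℂ (SGen n) :=
  if h : 1 ≤ a ∧ a < n then FreeAlgebra.ι ℂ (SGen.T ⟨a, h⟩) else 0

/-- The generator `c_a` in the free algebra (junk value `0` outside the valid range). -/
def cf (n a : ℕ) : FreeAlgebra ℂ (SGen n) :=
  if h : 1 ≤ a ∧ a ≤ n then FreeAlgebra.ι ℂ (SGen.C ⟨a, h⟩) else 0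

/-- Defining relations of the Sergeev superalgebra `S_n`. -/
inductive SRel (n : ℕ) : FreeAlgebra ℂ (SGen n) → FreeAlgebra ℂ (SGen n) → Prop
  | tsq (a : ℕ) (h1 : 1 ≤ a) (h2 : a < n) : SRel n (tf n a * tf n a) 1
  | tbraid (a : ℕ) (h1 : 1 ≤ a) (h2 : a + 1 < n) :
      SRel n (tf n a * tf n (a + 1) * tf n a) (tf n (a + 1) * tf n a * tf n (a + 1))
  | tanti (a b : ℕ) (h1 : 1 ≤ a) (h2 : b < n) (h3 : a + 1 < b) :
      SRel n (tf n a * tf n b) (-(tf n b * tf n a))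
  | csq (a : ℕ) (h1 : 1 ≤ a) (h2 : a ≤ n) : SRel n (cf n a * cf n a) (-1)
  | canti (a b : ℕ) (h1 : 1 ≤ a) (h2 : a ≤ n) (h3 : 1 ≤ b) (h4 : b ≤ n) (h5 : a ≠ b) :
      SRel n (cf n a * cf n b) (-(cf n b * cf n a))
  | tc (a b : ℕ) (h1 : 1 ≤ a) (h2 : a < n) (h3 : 1 ≤ b) (h4 : b ≤ n) :
      SRel n (tf n a * cf n b) (-(cf n b * tf n a))

/-- The Sergeev superalgebra `S_n`, presented by generators and relations. -/
abbrev Sergeev (n : ℕ) : Type := RingQuot (SRel n)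

/-- The generator `t_a` of `S_n`. -/
def tS (n a : ℕ) : Sergeev n := RingQuot.mkAlgHom ℂ (SRel n) (tf n a)

/-- The generator `c_a` of `S_n`. -/
def cS (n a : ℕ) : Sergeev n := RingQuot.mkAlgHom ℂ (SRel n) (cf n a)

/-- `t_{ab} = (-1)^(b-a-1) t_{b-1} ⋯ t_{a+1} t_a t_{a+1} ⋯ t_{b-1}` for `a < b`. -/
def ttS (n a b : ℕ) : Sergeev n :=
  (-1 : ℂ) ^ (b - a - 1) •
    ((((List.range' (a + 1) (b - 1 - a)).reverse.map (tS n)).prod) * tS n a *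
      (((List.range' (a + 1) (b - 1 - a)).map (tS n)).prod))

/-- `t_{ab}` for all `a ≠ b`, with `t_{ba} = -t_{ab}`. -/
def tsgn (n a b : ℕ) : Sergeev n :=
  if a < b then ttS n a b else if b < a then -ttS n b a else 0

/-- The odd Jucys–Murphy element `m_a = t_{1a} + ⋯ + t_{a-1,a}`. -/
def mS (n a : ℕ) : Sergeev n := ∑ k ∈ Finset.Ico 1 a, tsgn n k a

/-- The (even) Jucys–Murphy element `x_a = √2 m_a c_a`. -/
def xS (n a : ℕ) : Sergeev n := (Real.sqrt 2 : ℂ) • (mS n a * cS n a)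

/-- `s_a = (1/√2) t_a (c_{a+1} - c_a)`. -/
def sS (n a : ℕ) : Sergeev n := ((Real.sqrt 2 : ℂ))⁻¹ • (tS n a * (cS n (a + 1) - cS n a))

/-- The intertwiner `φ_a`. -/
def phiS (n a : ℕ) : Sergeev n :=
  sS n a * (xS n a ^ 2 - xS n (a + 1) ^ 2) + xS n a + xS n (a + 1)
    - cS n a * cS n (a + 1) * (xS n a - xS n (a + 1))

/-- Boxes of the shifted Young diagram of a strict partition `lam` (1-based): the
box `(i,j)` is present iff `i ≤ j ≤ λ_i + i - 1`. -/
def cells (lam : List ℕ) : Set (ℕ × ℕ) :=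
  {p | 1 ≤ p.1 ∧ p.1 ≤ p.2 ∧ p.2 + 1 ≤ lam.getD (p.1 - 1) 0 + p.1}

/-- A standard barred tableau with `n` boxes: a strict partition `lam` of `n`,
a standard filling `entry` of the shifted diagram of `lam` by `1, …, n`
(increasing along rows and columns), and a set `barred` of barred entries,
none of which occupies a diagonal box. -/
structure SBT (n : ℕ) : Type where
  lam : List ℕ
  sorted : lam.Pairwise (· > ·)
  pos : ∀ p ∈ lam, 0 < p
  sum_eq : lam.sum = n
  entry : ℕ × ℕ → ℕ
  bij : Set.BijOn entry (cells lam) (Set.Icc 1 n)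
  entry_junk : ∀ p, p ∉ cells lam → entry p = 0
  row_incr : ∀ p ∈ cells lam, (p.1, p.2 + 1) ∈ cells lam → entry p < entry (p.1, p.2 + 1)
  col_incr : ∀ p ∈ cells lam, (p.1 + 1, p.2) ∈ cells lam → entry p < entry (p.1 + 1, p.2)
  barred : Set ℕ
  barred_sub : barred ⊆ Set.Icc 1 n
  barred_nondiag : ∀ p ∈ cells lam, entry p ∈ barred → p.1 ≠ p.2

/-- The box occupied by the entry `a`. -/
def SBT.box {n : ℕ} (U : SBT n) (a : ℕ) : ℕ × ℕ :=
  if h : ∃ p ∈ cells U.lam, U.entry p = a then h.choose else (0, 0)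

/-- The content `j - i` of the box occupied by the entry `a`. -/
def SBT.content {n : ℕ} (U : SBT n) (a : ℕ) : ℕ := (U.box a).2 - (U.box a).1

/-- The signed content `κ_a(U) = ± √(σ(σ+1))`, negative iff `a` is barred in `U`. -/
def SBT.kappa {n : ℕ} (U : SBT n) (a : ℕ) : ℂ :=
  (if a ∈ U.barred then -1 else 1) *
    ((Real.sqrt ((U.content a : ℝ) * ((U.content a : ℝ) + 1)) : ℝ) : ℂ)

/-- A set of boxes is (the set of boxes of) a shifted Young diagram of a strict partition. -/
def IsShifted (S : Set (ℕ × ℕ)) : Prop :=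
  (∀ p ∈ S, 1 ≤ p.1 ∧ p.1 ≤ p.2) ∧
  (∀ p ∈ S, p.1 < p.2 → (p.1, p.2 - 1) ∈ S) ∧
  (∀ p ∈ S, 1 < p.1 → (p.1 - 1, p.2) ∈ S)

/-- `q` is an addable box for the shifted diagram `S`. -/
def Addable (S : Set (ℕ × ℕ)) (q : ℕ × ℕ) : Prop := q ∉ S ∧ IsShifted (insert q S)

/-- The shape formed by the boxes of `U` holding the entries `1, …, k`. -/
def SBT.shapeAt {n : ℕ} (U : SBT n) (k : ℕ) : Set (ℕ × ℕ) :=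
  {p | p ∈ cells U.lam ∧ U.entry p ≤ k}

/-- `√(σ(σ+1))` where `σ` is the content of the box `q`. -/
def sqc (q : ℕ × ℕ) : ℂ :=
  ((Real.sqrt (((q.2 - q.1 : ℕ) : ℝ) * (((q.2 - q.1 : ℕ) : ℝ) + 1)) : ℝ) : ℂ)

/-- The signed contents of all possible barred or unbarred entries placed
in addable boxes of the shape `S` (a shape with at most `n` boxes). -/
def bVals (n : ℕ) (S : Set (ℕ × ℕ)) : Finset ℂ :=
  ((Finset.Icc 1 (n + 1) ×ˢ Finset.Icc 1 (n + 1)).filter fun q => Addable S q).biUnion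
    fun q => if q.1 = q.2 then {sqc q} else {sqc q, -sqc q}

/-- The Jucys–Murphy idempotent of the sub-tableau of `U` on the entries `1, …, k`,
computed in the ambient algebra `S_N` (the inclusion `S_r → S_N` sends `t_a ↦ t_a`,
`c_a ↦ c_a` and hence `x_a ↦ x_a`, so this represents the image of `e` under it). -/
def eAux (N : ℕ) {r : ℕ} (U : SBT r) : ℕ → Sergeev N
  | 0 => 1
  | 1 => 1
  | (k + 2) =>
      eAux N U (k + 1) *
        Polynomial.aeval (xS N (k + 2))
          (∏ b ∈ bVals r (U.shapeAt (k + 1)) \ {U.kappa (k + 2)},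
            (Polynomial.C ((U.kappa (k + 2) - b)⁻¹) * (Polynomial.X - Polynomial.C b)))

/-- The element `e_U` of a standard barred tableau `U` with `r` boxes, viewed in `S_N`. -/
def eIn (N : ℕ) {r : ℕ} (U : SBT r) : Sergeev N := eAux N U r

/-- The element `e_U ∈ S_n` associated with a standard barred tableau `U` with `n` boxes. -/
def eU {n : ℕ} (U : SBT n) : Sergeev n := eIn n U

/-- `W` is a standard barred tableau with `r + 1` boxes obtained from the standard
barred tableau `V` with `r` boxes by adding one box containing the entry `r+1`
(barred or unbarred). -/
def Extends {r : ℕ} (V : SBT r) (W : SBT (r + 1)) : Prop :=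
  cells V.lam ⊆ cells W.lam ∧ (∀ p ∈ cells V.lam, W.entry p = V.entry p) ∧
    V.barred = W.barred \ {r + 1}

/-! ### Auxiliary lemmas -/

lemma mem_cells {lam : List ℕ} {p : ℕ × ℕ} :
    p ∈ cells lam ↔ 1 ≤ p.1 ∧ p.1 ≤ p.2 ∧ p.2 + 1 ≤ lam.getD (p.1 - 1) 0 + p.1 :=
  Iff.rfl

lemma getD_pos_of_lt {lam : List ℕ} (hpos : ∀ p ∈ lam, 0 < p) {k : ℕ}
    (hk : k < lam.length) : 0 < lam.getD k 0 := by
  rw [List.getD_eq_getElem lam 0 hk]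
  exact hpos _ (List.getElem_mem hk)

lemma getD_eq_zero_of_le {lam : List ℕ} {k : ℕ} (hk : lam.length ≤ k) :
    lam.getD k 0 = 0 := List.getD_eq_default lam 0 hk

lemma lt_length_of_getD_pos {lam : List ℕ} {k : ℕ} (h : 0 < lam.getD k 0) :
    k < lam.length := by
  by_contra hc
  rw [getD_eq_zero_of_le (le_of_not_gt hc)] at h
  exact lt_irrefl 0 h

lemma sorted_getD_lt {lam : List ℕ} (hs : lam.Pairwise (· > ·)) {i j : ℕ}
    (hij : i < j) (hj : j < lam.length) : lam.getD j 0 < lam.getD i 0 := by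
  have hi : i < lam.length := lt_trans hij hj
  rw [List.getD_eq_getElem lam 0 hi, List.getD_eq_getElem lam 0 hj]
  exact List.pairwise_iff_get.mp hs ⟨i, hi⟩ ⟨j, hj⟩ hij

/-- Rows of `cells lam`. -/
lemma cells_row {lam : List ℕ} {i j : ℕ} (hi : 1 ≤ i) :
    (i, j) ∈ cells lam ↔ i ≤ j ∧ j < lam.getD (i - 1) 0 + i := by
  simp only [mem_cells]
  omega

lemma cells_shifted {lam : List ℕ} (hs : lam.Pairwise (· > ·)) (hpos : ∀ p ∈ lam, 0 < p) :
    IsShifted (cells lam) := by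
  refine ⟨fun p hp => ⟨hp.1, hp.2.1⟩, fun p hp hlt => ?_, fun p hp hlt => ?_⟩
  · obtain ⟨h1, h2, h3⟩ := hp
    refine ⟨by omega, by simp; omega, ?_⟩
    simp only
    omega
  · obtain ⟨h1, h2, h3⟩ := hp
    have hposk : 0 < lam.getD (p.1 - 1) 0 := by omega
    have hk : p.1 - 1 < lam.length := lt_length_of_getD_pos hposk
    have := sorted_getD_lt hs (show p.1 - 2 < p.1 - 1 by omega) hk
    refine ⟨by simp; omega, by simp; omega, ?_⟩
    simp only
    have e : p.1 - 1 - 1 = p.1 - 2 := by omega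
    rw [e]
    omega

lemma IsShifted.mem_up {T : Set (ℕ × ℕ)} (hT : IsShifted T) {i j i' : ℕ}
    (h : (i, j) ∈ T) (h1 : 1 ≤ i') (h2 : i' ≤ i) : (i', j) ∈ T := by
  have key : ∀ d, (i' + d, j) ∈ T → (i', j) ∈ T := by
    intro d
    induction d with
    | zero => exact fun h => h
    | succ m ih =>
      intro h
      apply ih
      have h3 := hT.2.2 (i' + (m + 1), j) h (by simp only; omega)
      simp only at h3
      have e : i' + (m + 1) - 1 = i' + m := by omega
      rwa [e] at h3
  have e : i' + (i - i') = i := by omega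
  exact key (i - i') (by rw [e]; exact h)

lemma IsShifted.mem_left {T : Set (ℕ × ℕ)} (hT : IsShifted T) {i j j' : ℕ}
    (h : (i, j) ∈ T) (h1 : i ≤ j') (h2 : j' ≤ j) : (i, j') ∈ T := by
  have key : ∀ d, (i, j' + d) ∈ T → (i, j') ∈ T := by
    intro d
    induction d with
    | zero => exact fun h => h
    | succ m ih =>
      intro h
      apply ih
      have hi1 : 1 ≤ i := (hT.1 _ h).1
      have h3 := hT.2.1 (i, j' + (m + 1)) h (by simp only; omega)
      simp only at h3
      have e : j' + (m + 1) - 1 = j' + m := by omega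
      rwa [e] at h3
  have e : j' + (j - j') = j := by omega
  exact key (j - j') (by rw [e]; exact h)

lemma IsShifted.snd_le_ncard {T : Set (ℕ × ℕ)} (hT : IsShifted T) (hfin : T.Finite)
    {p : ℕ × ℕ} (hp : p ∈ T) : p.2 ≤ T.ncard := by
  classical
  have h1 : 1 ≤ p.1 := (hT.1 p hp).1
  have h12 : p.1 ≤ p.2 := (hT.1 p hp).2
  have hmap : ∀ j ∈ Finset.Icc 1 p.2,
      (if j ≤ p.1 then (j, p.2) else (p.1, j - 1)) ∈ hfin.toFinset := by
    intro j hj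
    simp only [Finset.mem_Icc] at hj
    split_ifs with hle
    · exact hfin.mem_toFinset.2 (hT.mem_up (by simpa using hp) hj.1 hle)
    · exact hfin.mem_toFinset.2 (hT.mem_left (by simpa using hp) (by omega) (by omega))
  have hinj : Set.InjOn (fun j => if j ≤ p.1 then (j, p.2) else (p.1, j - 1))
      ↑(Finset.Icc 1 p.2) := by
    intro a ha b hb hab
    simp only [Finset.coe_Icc, Set.mem_Icc] at ha hb
    simp only at hab
    split_ifs at hab <;> simp only [Prod.mk.injEq] at hab <;> omega
  have hcard := Finset.card_le_card_of_injOn _ hmap hinj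
  rw [Nat.card_Icc] at hcard
  rw [Set.ncard_eq_toFinset_card _ hfin]
  omega

lemma SBT.cells_finite {n : ℕ} (U : SBT n) : (cells U.lam).Finite :=
  Set.Finite.of_finite_image (U.bij.image_eq ▸ Set.finite_Icc 1 n) U.bij.injOn

lemma SBT.cells_ncard {n : ℕ} (U : SBT n) : (cells U.lam).ncard = n := by
  have h := Set.ncard_image_of_injOn U.bij.injOn
  rw [U.bij.image_eq] at h
  rw [← h, ← Finset.coe_Icc, Set.ncard_coe_finset, Nat.card_Icc]
  omega

lemma SBT.entry_mem {n : ℕ} (U : SBT n) {p : ℕ × ℕ} (hp : p ∈ cells U.lam) :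
    U.entry p ∈ Set.Icc 1 n := U.bij.mapsTo hp

lemma SBT.shapeAt_subset {n : ℕ} (U : SBT n) (k : ℕ) : U.shapeAt k ⊆ cells U.lam :=
  fun _ hp => hp.1

lemma SBT.shapeAt_finite {n : ℕ} (U : SBT n) (k : ℕ) : (U.shapeAt k).Finite :=
  U.cells_finite.subset (U.shapeAt_subset k)

lemma SBT.shapeAt_all {n : ℕ} (U : SBT n) : U.shapeAt n = cells U.lam := by
  ext p
  exact ⟨fun h => h.1, fun h => ⟨h, (U.entry_mem h).2⟩⟩

lemma SBT.shapeAt_bijOn {n : ℕ} (U : SBT n) {k : ℕ} (hk : k ≤ n) :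
    Set.BijOn U.entry (U.shapeAt k) (Set.Icc 1 k) := by
  refine ⟨fun p hp => ⟨(U.entry_mem hp.1).1, hp.2⟩,
    U.bij.injOn.mono (U.shapeAt_subset k), fun a ha => ?_⟩
  obtain ⟨ha1, ha2⟩ := ha
  obtain ⟨p, hp, hpa⟩ := U.bij.surjOn ⟨ha1, le_trans ha2 hk⟩
  exact ⟨p, ⟨hp, le_of_eq_of_le hpa ha2⟩, hpa⟩

lemma SBT.shapeAt_ncard {n : ℕ} (U : SBT n) {k : ℕ} (hk : k ≤ n) :
    (U.shapeAt k).ncard = k := by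
  have h := Set.ncard_image_of_injOn (U.shapeAt_bijOn hk).injOn
  rw [(U.shapeAt_bijOn hk).image_eq] at h
  rw [← h, ← Finset.coe_Icc, Set.ncard_coe_finset, Nat.card_Icc]
  omega

lemma addable_bounds {S : Set (ℕ × ℕ)} (hfin : S.Finite) {q : ℕ × ℕ} (hq : Addable S q) :
    1 ≤ q.1 ∧ q.1 ≤ q.2 ∧ q.2 ≤ S.ncard + 1 := by
  have hT : IsShifted (insert q S) := hq.2
  have hqT : q ∈ insert q S := Set.mem_insert q S
  have h2 := hT.snd_le_ncard (hfin.insert q) hqT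
  rw [Set.ncard_insert_of_notMem hq.1 hfin] at h2
  exact ⟨(hT.1 q hqT).1, (hT.1 q hqT).2, h2⟩

lemma bVals_congr {S : Set (ℕ × ℕ)} (hfin : S.Finite) {n m : ℕ}
    (hS : S.ncard ≤ n) (hnm : n ≤ m) : bVals m S = bVals n S := by
  unfold bVals
  congr 1
  ext q
  simp only [Finset.mem_filter, Finset.mem_product, Finset.mem_Icc]
  constructor
  · rintro ⟨-, hq⟩
    obtain ⟨h1, h2, h3⟩ := addable_bounds hfin hq
    exact ⟨⟨⟨h1, by omega⟩, by omega, by omega⟩, hq⟩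
  · rintro ⟨-, hq⟩
    obtain ⟨h1, h2, h3⟩ := addable_bounds hfin hq
    exact ⟨⟨⟨h1, by omega⟩, by omega, by omega⟩, hq⟩

lemma SBT.box_eq {n : ℕ} (U : SBT n) {p : ℕ × ℕ} {a : ℕ} (hp : p ∈ cells U.lam)
    (ha : U.entry p = a) : U.box a = p := by
  have h : ∃ q ∈ cells U.lam, U.entry q = a := ⟨p, hp, ha⟩
  rw [SBT.box, dif_pos h]
  exact U.bij.injOn h.choose_spec.1 hp (h.choose_spec.2.trans ha.symm)

lemma eAux_succ (N : ℕ) {r : ℕ} (U : SBT r) (k : ℕ) :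
    eAux N U (k + 2) = eAux N U (k + 1) *
      Polynomial.aeval (xS N (k + 2))
        (∏ b ∈ bVals r (U.shapeAt (k + 1)) \ {U.kappa (k + 2)},
          (Polynomial.C ((U.kappa (k + 2) - b)⁻¹) * (Polynomial.X - Polynomial.C b))) := rfl

namespace Extends

variable {n : ℕ} {V : SBT n} {W : SBT (n + 1)} (h : Extends V W)

lemma entry_top (hE : Extends V W) {p : ℕ × ℕ} (hp : p ∈ cells W.lam)
    (hnp : p ∉ cells V.lam) : W.entry p = n + 1 := by
  obtain ⟨hm1, hm2⟩ := Set.mem_Icc.mp (W.entry_mem hp)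
  by_contra hne
  have hle : W.entry p ∈ Set.Icc 1 n := Set.mem_Icc.mpr ⟨hm1, by omega⟩
  obtain ⟨p', hp', hpa⟩ := V.bij.surjOn hle
  have : W.entry p' = W.entry p := by rw [hE.2.1 p' hp', hpa]
  have := W.bij.injOn (hE.1 hp') hp this
  exact hnp (this ▸ hp')

lemma shapeAt_eq (hE : Extends V W) {k : ℕ} (hk : k ≤ n) :
    W.shapeAt k = V.shapeAt k := by
  ext p
  constructor
  · rintro ⟨hp, hpk⟩
    by_cases hv : p ∈ cells V.lam
    · exact ⟨hv, by rw [← hE.2.1 p hv]; exact hpk⟩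
    · exact absurd hpk (by rw [hE.entry_top hp hv]; omega)
  · rintro ⟨hp, hpk⟩
    exact ⟨hE.1 hp, by rw [hE.2.1 p hp]; exact hpk⟩

lemma barred_iff (hE : Extends V W) {a : ℕ} (ha : a ≤ n) :
    a ∈ W.barred ↔ a ∈ V.barred := by
  rw [hE.2.2]
  simp only [Set.mem_diff, Set.mem_singleton_iff]
  constructor
  · intro hw; exact ⟨hw, by omega⟩
  · exact fun hw => hw.1

lemma box_eq (hE : Extends V W) {a : ℕ} (h1 : 1 ≤ a) (h2 : a ≤ n) :
    W.box a = V.box a := by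
  obtain ⟨p, hp, hpa⟩ := V.bij.surjOn (⟨h1, h2⟩ : a ∈ Set.Icc 1 n)
  rw [V.box_eq hp hpa, W.box_eq (hE.1 hp) ((hE.2.1 p hp).trans hpa)]

lemma kappa_eq (hE : Extends V W) {a : ℕ} (h1 : 1 ≤ a) (h2 : a ≤ n) :
    W.kappa a = V.kappa a := by
  rw [SBT.kappa, SBT.kappa, SBT.content, SBT.content, hE.box_eq h1 h2]
  congr 1
  by_cases hb : a ∈ V.barred
  · rw [if_pos hb, if_pos ((hE.barred_iff h2).2 hb)]
  · rw [if_neg hb, if_neg (fun hw => hb ((hE.barred_iff h2).1 hw))]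

lemma eAux_eq (hE : Extends V W) : ∀ k, k ≤ n → eAux (n + 1) W k = eAux (n + 1) V k := by
  intro k
  induction k with
  | zero => intro _; rfl
  | succ m ih =>
    intro hk
    match m, ih, hk with
    | 0, _, _ => rfl
    | l + 1, ih, hk =>
      rw [eAux_succ, eAux_succ, ih (by omega), hE.shapeAt_eq (show l + 1 ≤ n by omega),
        hE.kappa_eq (by omega) (by omega),
        bVals_congr (V.shapeAt_finite (l + 1))
          (show (V.shapeAt (l + 1)).ncard ≤ n by
            rw [V.shapeAt_ncard (show l + 1 ≤ n by omega)]; omega)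
          (show n ≤ n + 1 by omega)]

end Extends

lemma mem_cells_mk {lam : List ℕ} {x y : ℕ} :
    (x, y) ∈ cells lam ↔ 1 ≤ x ∧ x ≤ y ∧ y + 1 ≤ lam.getD (x - 1) 0 + x := Iff.rfl

lemma addable_row {lam : List ℕ} {q : ℕ × ℕ} (hq : Addable (cells lam) q) :
    q.2 = lam.getD (q.1 - 1) 0 + q.1 ∧ q.1 - 1 ≤ lam.length ∧ 1 ≤ q.1 := by
  obtain ⟨hnot, hsh⟩ := hq
  have hqT : q ∈ insert q (cells lam) := Set.mem_insert _ _
  obtain ⟨h1, h12⟩ := hsh.1 q hqT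
  rcases eq_or_lt_of_le h12 with heq | hlt
  · -- diagonal case q.1 = q.2
    have hg0 : lam.getD (q.1 - 1) 0 = 0 := by
      by_contra hg
      exact hnot (mem_cells.2 ⟨h1, h12, by omega⟩)
    refine ⟨by omega, ?_, h1⟩
    by_cases hi : q.1 = 1
    · simp [hi]
    · have hm := hsh.2.2 q hqT (by omega)
      have hne : (q.1 - 1, q.2) ≠ q := by
        intro hc
        have := congrArg Prod.fst hc
        dsimp only at this
        omega
      have hcell : (q.1 - 1, q.2) ∈ cells lam := (Set.mem_insert_iff.1 hm).resolve_left hne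
      obtain ⟨-, h3⟩ := (cells_row (show 1 ≤ q.1 - 1 by omega)).1 hcell
      have hlt2 : q.1 - 1 - 1 < lam.length := lt_length_of_getD_pos (by omega)
      omega
  · -- row case q.1 < q.2
    have hm := hsh.2.1 q hqT hlt
    have hne : (q.1, q.2 - 1) ≠ q := by
      intro hc
      have := congrArg Prod.snd hc
      dsimp only at this
      omega
    have hcell : (q.1, q.2 - 1) ∈ cells lam := (Set.mem_insert_iff.1 hm).resolve_left hne
    obtain ⟨-, h3⟩ := (cells_row h1).1 hcell
    have hnc : ¬(q.1 ≤ q.2 ∧ q.2 < lam.getD (q.1 - 1) 0 + q.1) :=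
      fun hc => hnot ((cells_row h1).2 hc)
    have hrow : q.2 = lam.getD (q.1 - 1) 0 + q.1 := by omega
    have hl : q.1 - 1 < lam.length := lt_length_of_getD_pos (by omega)
    exact ⟨hrow, by omega, h1⟩

lemma addable_above {lam : List ℕ} {q : ℕ × ℕ} (hq : Addable (cells lam) q)
    (h2 : 2 ≤ q.1) : lam.getD (q.1 - 1) 0 + 2 ≤ lam.getD (q.1 - 1 - 1) 0 := by
  obtain ⟨hrow, hlen, h1⟩ := addable_row hq
  have hm := hq.2.2.2 q (Set.mem_insert _ _) (by omega)
  have hne : (q.1 - 1, q.2) ≠ q := by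
    intro hc
    have := congrArg Prod.fst hc
    dsimp only at this
    omega
  have hcell : (q.1 - 1, q.2) ∈ cells lam := (Set.mem_insert_iff.1 hm).resolve_left hne
  obtain ⟨-, h3⟩ := (cells_row (show 1 ≤ q.1 - 1 by omega)).1 hcell
  omega

/-- The partition obtained by adding a box in row `i`. -/
def lamExt (lam : List ℕ) (i : ℕ) : List ℕ :=
  if i - 1 < lam.length then lam.set (i - 1) (lam.getD (i - 1) 0 + 1) else lam ++ [1]

lemma lamExt_getD {lam : List ℕ} {i : ℕ} (hlen : i - 1 ≤ lam.length) (k : ℕ) :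
    (lamExt lam i).getD k 0 =
      if k = i - 1 then lam.getD (i - 1) 0 + 1 else lam.getD k 0 := by
  unfold lamExt
  split_ifs with h1 h2 h2
  · subst h2
    rw [List.getD_eq_getElem _ _ (by rw [List.length_set]; exact h1), List.getElem_set,
      if_pos rfl]
  · by_cases hk : k < lam.length
    · rw [List.getD_eq_getElem _ _ (by rw [List.length_set]; exact hk), List.getElem_set,
        if_neg (fun hc => h2 hc.symm), List.getD_eq_getElem _ _ hk]
    · rw [getD_eq_zero_of_le (by rw [List.length_set]; omega), getD_eq_zero_of_le (by omega)]
  · have he : i - 1 = lam.length := by omega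
    subst h2
    have hL : (lam ++ [1]).getD (i - 1) 0 = 1 := by
      rw [he, List.getD_append_right _ _ _ _ (le_refl _)]
      simp
    rw [hL, getD_eq_zero_of_le (by omega)]
  · have he : i - 1 = lam.length := by omega
    by_cases hk : k < lam.length
    · rw [List.getD_append _ _ _ _ hk]
    · rw [getD_eq_zero_of_le (by simp; omega), getD_eq_zero_of_le (by omega)]

lemma lamExt_length {lam : List ℕ} (i : ℕ) :
    (lamExt lam i).length = if i - 1 < lam.length then lam.length else lam.length + 1 := by
  unfold lamExt
  split_ifs <;> simp

lemma list_sum_set (l : List ℕ) (k v : ℕ) (h : k < l.length) :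
    (l.set k v).sum + l[k] = l.sum + v := by
  conv_rhs => rw [← List.sum_take_add_sum_drop l k]
  rw [List.set_eq_take_cons_drop _ h, List.sum_append, List.sum_cons,
    List.drop_eq_getElem_cons h, List.sum_cons]
  omega

lemma lamExt_sum {lam : List ℕ} {i : ℕ} (hlen : i - 1 ≤ lam.length) :
    (lamExt lam i).sum = lam.sum + 1 := by
  unfold lamExt
  split_ifs with h
  · have hs := list_sum_set lam (i - 1) (lam.getD (i - 1) 0 + 1) h
    have he : lam.getD (i - 1) 0 = lam[i - 1] := List.getD_eq_getElem lam 0 h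
    omega
  · simp

lemma lamExt_pos {lam : List ℕ} {i : ℕ} (hpos : ∀ p ∈ lam, 0 < p) :
    ∀ p ∈ lamExt lam i, 0 < p := by
  unfold lamExt
  split_ifs with h
  · intro p hp
    rcases List.mem_or_eq_of_mem_set hp with h' | rfl
    · exact hpos p h'
    · omega
  · intro p hp
    rcases List.mem_append.1 hp with h' | h'
    · exact hpos p h'
    · simp at h'; omega

lemma sorted_of_adj {l : List ℕ}
    (h : ∀ k, k + 1 < l.length → l.getD (k + 1) 0 < l.getD k 0) : l.Pairwise (· > ·) := by
  rw [List.pairwise_iff_get]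
  have key : ∀ d k, k + d + 1 < l.length → l.getD (k + d + 1) 0 < l.getD k 0 := by
    intro d
    induction d with
    | zero => intro k hk; exact h k hk
    | succ m ih =>
      intro k hk
      have h1 := h (k + m + 1) (by omega)
      have h2 := ih k (by omega)
      have e : k + (m + 1) + 1 = k + m + 1 + 1 := by omega
      rw [e]
      omega
  intro a b hab
  have hb : (b : ℕ) < l.length := b.isLt
  have e : (b : ℕ) = (a : ℕ) + ((b : ℕ) - (a : ℕ) - 1) + 1 := by omega
  have := key ((b : ℕ) - (a : ℕ) - 1) (a : ℕ) (by omega)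
  rw [← e] at this
  simp only [List.get_eq_getElem]
  rw [List.getD_eq_getElem _ _ hb, List.getD_eq_getElem _ _ a.isLt] at this
  exact this

lemma lamExt_sorted {lam : List ℕ} {q : ℕ × ℕ} (hs : lam.Pairwise (· > ·))
    (hpos : ∀ p ∈ lam, 0 < p) (hq : Addable (cells lam) q) :
    (lamExt lam q.1).Pairwise (· > ·) := by
  obtain ⟨hrow, hlen, h1⟩ := addable_row hq
  apply sorted_of_adj
  intro k hk
  rw [lamExt_length] at hk
  rw [lamExt_getD hlen, lamExt_getD hlen]
  by_cases e1 : k + 1 = q.1 - 1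
  · rw [if_pos e1]
    by_cases e2 : k = q.1 - 1
    · omega
    · rw [if_neg e2]
      have haa := addable_above hq (by omega)
      have e : q.1 - 1 - 1 = k := by omega
      rw [e] at haa
      omega
  · rw [if_neg e1]
    by_cases e2 : k = q.1 - 1
    · rw [if_pos e2, ← e2]
      by_cases hkl : k + 1 < lam.length
      · have := sorted_getD_lt hs (show k < k + 1 by omega) hkl
        omega
      · rw [getD_eq_zero_of_le (show lam.length ≤ k + 1 by omega)]
        omega
    · rw [if_neg e2]
      have hkl : k + 1 ≤ lam.length := by split_ifs at hk <;> omega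
      rcases eq_or_lt_of_le hkl with heq | hlt
      · rw [getD_eq_zero_of_le (le_of_eq heq.symm)]
        exact getD_pos_of_lt hpos (by omega)
      · exact sorted_getD_lt hs (show k < k + 1 by omega) hlt

lemma cells_lamExt {lam : List ℕ} {q : ℕ × ℕ} (hq : Addable (cells lam) q) :
    cells (lamExt lam q.1) = insert q (cells lam) := by
  obtain ⟨hrow, hlen, h1⟩ := addable_row hq
  obtain ⟨i, j⟩ := q
  dsimp only at hrow hlen h1 ⊢
  ext ⟨x, y⟩
  simp only [Set.mem_insert_iff, mem_cells_mk, Prod.mk.injEq]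
  rw [lamExt_getD hlen]
  by_cases hx0 : x = 0
  · subst hx0
    constructor
    · rintro ⟨ha, -, -⟩; omega
    · rintro (⟨e1, -⟩ | ⟨ha, -, -⟩) <;> omega
  · by_cases hxi : x = i
    · subst hxi
      rw [if_pos rfl]
      constructor
      · rintro ⟨a, b, c⟩
        by_cases hy : y + 1 ≤ lam.getD (x - 1) 0 + x
        · exact Or.inr ⟨a, b, hy⟩
        · exact Or.inl ⟨rfl, by omega⟩
      · rintro (⟨-, rfl⟩ | ⟨a, b, c⟩)
        · exact ⟨h1, by omega, by omega⟩
        · exact ⟨a, b, by omega⟩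
    · rw [if_neg (by omega)]
      exact ⟨fun hc => Or.inr hc, fun hc => hc.resolve_left (fun hc2 => hxi hc2.1)⟩

lemma getD_le_of_cells_subset {l1 l2 : List ℕ} (h : cells l1 ⊆ cells l2) (k : ℕ) :
    l1.getD k 0 ≤ l2.getD k 0 := by
  set v := l1.getD k 0 with hv
  rcases Nat.eq_zero_or_pos v with h0 | h0
  · omega
  · have hm : (k + 1, v + k) ∈ cells l1 := by
      rw [mem_cells_mk]
      refine ⟨by omega, by omega, ?_⟩
      have e : k + 1 - 1 = k := by omega
      rw [e]
      omega
    have := h hm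
    rw [mem_cells_mk] at this
    obtain ⟨-, -, h3⟩ := this
    have e : k + 1 - 1 = k := by omega
    rw [e] at h3
    omega

lemma list_eq_of_getD {l1 l2 : List ℕ} (h1 : ∀ p ∈ l1, 0 < p) (h2 : ∀ p ∈ l2, 0 < p)
    (h : ∀ k, l1.getD k 0 = l2.getD k 0) : l1 = l2 := by
  have hlen : ∀ (a b : List ℕ), (∀ p ∈ a, 0 < p) → (∀ k, a.getD k 0 = b.getD k 0) →
      a.length ≤ b.length := by
    intro a b ha hab
    by_contra hc
    have hp : 0 < a.getD b.length 0 := getD_pos_of_lt ha (by omega)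
    rw [hab b.length, getD_eq_zero_of_le (le_refl _)] at hp
    omega
  have hL : l1.length = l2.length :=
    le_antisymm (hlen l1 l2 h1 h) (hlen l2 l1 h2 (fun k => (h k).symm))
  refine List.ext_getElem hL ?_
  intro k hk1 hk2
  have := h k
  rwa [List.getD_eq_getElem _ _ hk1, List.getD_eq_getElem _ _ hk2] at this

lemma cells_inj {l1 l2 : List ℕ} (h1 : ∀ p ∈ l1, 0 < p) (h2 : ∀ p ∈ l2, 0 < p)
    (h : cells l1 = cells l2) : l1 = l2 :=
  list_eq_of_getD h1 h2 (fun k =>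
    le_antisymm (getD_le_of_cells_subset h.le k) (getD_le_of_cells_subset h.ge k))

lemma SBT.ext' {n : ℕ} {U W : SBT n} (h1 : U.lam = W.lam) (h2 : U.entry = W.entry)
    (h3 : U.barred = W.barred) : U = W := by
  cases U
  cases W
  dsimp only at h1 h2 h3
  subst h1
  subst h2
  subst h3
  rfl

lemma ne_q_of_mem {S : Set (ℕ × ℕ)} {q p : ℕ × ℕ} (hq : Addable S q) (hp : p ∈ S) :
    p ≠ q := fun hc => hq.1 (hc ▸ hp)

/-- The standard barred tableau obtained from `V` by adding the entry `n+1`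
(barred if `eps`) in the addable box `q`. -/
def SBT.extend {n : ℕ} (V : SBT n) (q : ℕ × ℕ) (eps : Bool)
    (hq : Addable (cells V.lam) q) (heps : eps = true → q.1 ≠ q.2) : SBT (n + 1) where
  lam := lamExt V.lam q.1
  sorted := lamExt_sorted V.sorted V.pos hq
  pos := lamExt_pos V.pos
  sum_eq := by rw [lamExt_sum (addable_row hq).2.1, V.sum_eq]
  entry := fun p => if p = q then n + 1 else V.entry p
  bij := by
    rw [cells_lamExt hq]
    refine ⟨?_, ?_, ?_⟩
    · intro p hp
      dsimp only
      rcases Set.mem_insert_iff.1 hp with rfl | hp'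
      · rw [if_pos rfl]
        exact ⟨by omega, le_refl _⟩
      · rw [if_neg (ne_q_of_mem hq hp')]
        obtain ⟨ha, hb⟩ := V.entry_mem hp'
        exact ⟨ha, by omega⟩
    · intro a ha b hb hab
      dsimp only at hab
      rcases Set.mem_insert_iff.1 ha with rfl | ha' <;>
        rcases Set.mem_insert_iff.1 hb with rfl | hb'
      · rfl
      · rw [if_pos rfl, if_neg (ne_q_of_mem hq hb')] at hab
        obtain ⟨-, hbb⟩ := V.entry_mem hb'
        omega
      · rw [if_pos rfl, if_neg (ne_q_of_mem hq ha')] at hab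
        obtain ⟨-, haa⟩ := V.entry_mem ha'
        omega
      · rw [if_neg (ne_q_of_mem hq ha'), if_neg (ne_q_of_mem hq hb')] at hab
        exact V.bij.injOn ha' hb' hab
    · intro a ha
      obtain ⟨ha1, ha2⟩ := ha
      by_cases han : a = n + 1
      · refine ⟨q, Set.mem_insert _ _, ?_⟩
        dsimp only
        rw [if_pos rfl, han]
      · obtain ⟨p, hp, hpa⟩ := V.bij.surjOn (⟨ha1, by omega⟩ : a ∈ Set.Icc 1 n)
        refine ⟨p, Set.mem_insert_of_mem _ hp, ?_⟩
        dsimp only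
        rw [if_neg (ne_q_of_mem hq hp)]
        exact hpa
  entry_junk := by
    intro p hp
    rw [cells_lamExt hq, Set.mem_insert_iff] at hp
    push_neg at hp
    rw [if_neg hp.1]
    exact V.entry_junk p hp.2
  row_incr := by
    intro p hp hp2
    rw [cells_lamExt hq] at hp hp2
    rcases Set.mem_insert_iff.1 hp with rfl | hp'
    · exfalso
      rcases Set.mem_insert_iff.1 hp2 with hc | hc
      · have := congrArg Prod.snd hc
        dsimp only at this
        omega
      · exact hq.1 ((cells_shifted V.sorted V.pos).mem_left hc
          (hq.2.1 p (Set.mem_insert _ _)).2 (by omega))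
    · rw [if_neg (ne_q_of_mem hq hp')]
      rcases Set.mem_insert_iff.1 hp2 with hc | hc
      · rw [if_pos hc]
        obtain ⟨-, hbb⟩ := V.entry_mem hp'
        omega
      · rw [if_neg (ne_q_of_mem hq hc)]
        exact V.row_incr p hp' hc
  col_incr := by
    intro p hp hp2
    rw [cells_lamExt hq] at hp hp2
    rcases Set.mem_insert_iff.1 hp with rfl | hp'
    · exfalso
      rcases Set.mem_insert_iff.1 hp2 with hc | hc
      · have := congrArg Prod.fst hc
        dsimp only at this
        omega
      · exact hq.1 ((cells_shifted V.sorted V.pos).mem_up hc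
          (hq.2.1 p (Set.mem_insert _ _)).1 (by omega))
    · rw [if_neg (ne_q_of_mem hq hp')]
      rcases Set.mem_insert_iff.1 hp2 with hc | hc
      · rw [if_pos hc]
        obtain ⟨-, hbb⟩ := V.entry_mem hp'
        omega
      · rw [if_neg (ne_q_of_mem hq hc)]
        exact V.col_incr p hp' hc
  barred := if eps then insert (n + 1) V.barred else V.barred
  barred_sub := by
    cases eps
    · simp only [Bool.false_eq_true, if_false]
      intro a ha
      obtain ⟨h1, h2⟩ := V.barred_sub ha
      exact ⟨h1, by omega⟩
    · simp only [if_true]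
      intro a ha
      rcases Set.mem_insert_iff.1 ha with rfl | ha'
      · exact ⟨by omega, le_refl _⟩
      · obtain ⟨h1, h2⟩ := V.barred_sub ha'
        exact ⟨h1, by omega⟩
  barred_nondiag := by
    intro p hp hb
    rw [cells_lamExt hq] at hp
    rcases Set.mem_insert_iff.1 hp with rfl | hp'
    · rw [if_pos rfl] at hb
      cases eps
      · simp only [Bool.false_eq_true, if_false] at hb
        obtain ⟨-, h2⟩ := V.barred_sub hb
        omega
      · exact heps rfl
    · rw [if_neg (ne_q_of_mem hq hp')] at hb
      obtain ⟨-, h2⟩ := V.entry_mem hp'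
      have hbV : V.entry p ∈ V.barred := by
        cases eps
        · simpa using hb
        · simp only [if_true] at hb
          rcases Set.mem_insert_iff.1 hb with hc | hc
          · omega
          · exact hc
      exact V.barred_nondiag p hp' hbV

lemma SBT.extend_cells {n : ℕ} (V : SBT n) (q : ℕ × ℕ) (eps : Bool)
    (hq : Addable (cells V.lam) q) (heps : eps = true → q.1 ≠ q.2) :
    cells (V.extend q eps hq heps).lam = insert q (cells V.lam) := cells_lamExt hq

lemma SBT.extend_entry_q {n : ℕ} (V : SBT n) (q : ℕ × ℕ) (eps : Bool)
    (hq : Addable (cells V.lam) q) (heps : eps = true → q.1 ≠ q.2) :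
    (V.extend q eps hq heps).entry q = n + 1 := if_pos rfl

lemma SBT.extend_barred {n : ℕ} (V : SBT n) (q : ℕ × ℕ) (eps : Bool)
    (hq : Addable (cells V.lam) q) (heps : eps = true → q.1 ≠ q.2) :
    (V.extend q eps hq heps).barred = if eps then insert (n + 1) V.barred else V.barred := rfl

lemma SBT.extend_extends {n : ℕ} (V : SBT n) (q : ℕ × ℕ) (eps : Bool)
    (hq : Addable (cells V.lam) q) (heps : eps = true → q.1 ≠ q.2) :
    Extends V (V.extend q eps hq heps) := by
  refine ⟨?_, ?_, ?_⟩
  · rw [SBT.extend_cells]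
    exact Set.subset_insert _ _
  · intro p hp
    show (if p = q then n + 1 else V.entry p) = V.entry p
    rw [if_neg (ne_q_of_mem hq hp)]
  · rw [SBT.extend_barred]
    cases eps
    · simp only [Bool.false_eq_true, if_false]
      ext a
      simp only [Set.mem_diff, Set.mem_singleton_iff]
      constructor
      · intro ha
        refine ⟨ha, fun hc => ?_⟩
        obtain ⟨-, h2⟩ := V.barred_sub ha
        omega
      · exact fun h => h.1
    · simp only [if_true]
      ext a
      simp only [Set.mem_diff, Set.mem_singleton_iff, Set.mem_insert_iff]
      constructor
      · intro ha
        refine ⟨Or.inr ha, fun hc => ?_⟩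
        obtain ⟨-, h2⟩ := V.barred_sub ha
        omega
      · rintro ⟨(rfl | ha), hne⟩
        · exact absurd rfl hne
        · exact ha

lemma SBT.extend_box {n : ℕ} (V : SBT n) (q : ℕ × ℕ) (eps : Bool)
    (hq : Addable (cells V.lam) q) (heps : eps = true → q.1 ≠ q.2) :
    (V.extend q eps hq heps).box (n + 1) = q :=
  SBT.box_eq _ (by rw [SBT.extend_cells]; exact Set.mem_insert _ _)
    (SBT.extend_entry_q V q eps hq heps)

lemma SBT.extend_barred_top {n : ℕ} (V : SBT n) (q : ℕ × ℕ) (eps : Bool)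
    (hq : Addable (cells V.lam) q) (heps : eps = true → q.1 ≠ q.2) :
    (n + 1 ∈ (V.extend q eps hq heps).barred) ↔ eps = true := by
  rw [SBT.extend_barred]
  cases eps
  · simp only [Bool.false_eq_true, if_false]
    constructor
    · intro hc
      obtain ⟨-, h2⟩ := V.barred_sub hc
      omega
    · intro hc
      exact absurd hc (by simp)
  · simp

lemma SBT.extend_kappa {n : ℕ} (V : SBT n) (q : ℕ × ℕ) (eps : Bool)
    (hq : Addable (cells V.lam) q) (heps : eps = true → q.1 ≠ q.2) :
    (V.extend q eps hq heps).kappa (n + 1) = (if eps then (-1 : ℂ) else 1) * sqc q := by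
  rw [SBT.kappa, SBT.content, SBT.extend_box]
  congr 1
  · by_cases he : eps = true
    · rw [if_pos ((V.extend_barred_top q eps hq heps).2 he), he, if_pos rfl]
    · rw [if_neg (fun hc => he ((V.extend_barred_top q eps hq heps).1 hc)),
        if_neg (fun hc => he (by cases eps <;> simp_all))]

lemma extends_classify {n : ℕ} {V : SBT n} {W : SBT (n + 1)} (hE : Extends V W) :
    ∃ (q : ℕ × ℕ) (eps : Bool) (hq : Addable (cells V.lam) q)
      (heps : eps = true → q.1 ≠ q.2), W = V.extend q eps hq heps := by
  classical
  have hfinV := V.cells_finite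
  have hfinW := W.cells_finite
  have hlt : (cells V.lam).ncard < (cells W.lam).ncard := by
    rw [V.cells_ncard, W.cells_ncard]
    omega
  obtain ⟨q, hqW, hqV⟩ := Set.exists_mem_notMem_of_ncard_lt_ncard hlt hfinV
  have hcellsW : cells W.lam = insert q (cells V.lam) := by
    refine (Set.eq_of_subset_of_ncard_le (Set.insert_subset hqW hE.1) ?_ hfinW).symm
    rw [Set.ncard_insert_of_notMem hqV hfinV, V.cells_ncard, W.cells_ncard]
  have hq : Addable (cells V.lam) q :=
    ⟨hqV, by rw [← hcellsW]; exact cells_shifted W.sorted W.pos⟩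
  have hWq : W.entry q = n + 1 := hE.entry_top hqW hqV
  by_cases hmem : n + 1 ∈ W.barred
  · refine ⟨q, true, hq, fun _ => W.barred_nondiag q hqW (by rw [hWq]; exact hmem), ?_⟩
    apply SBT.ext'
    · refine cells_inj W.pos (lamExt_pos V.pos) ?_
      rw [hcellsW, SBT.extend_cells]
    · funext p
      show W.entry p = (if p = q then n + 1 else V.entry p)
      by_cases hpq : p = q
      · rw [if_pos hpq, hpq, hWq]
      · rw [if_neg hpq]
        by_cases hpV : p ∈ cells V.lam
        · exact hE.2.1 p hpV
        · rw [W.entry_junk p (by rw [hcellsW]; simp [Set.mem_insert_iff, hpq, hpV]),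
            V.entry_junk p hpV]
    · rw [SBT.extend_barred, if_pos rfl, hE.2.2]
      ext a
      simp only [Set.mem_insert_iff, Set.mem_diff, Set.mem_singleton_iff]
      constructor
      · intro ha
        by_cases hc : a = n + 1
        · exact Or.inl hc
        · exact Or.inr ⟨ha, hc⟩
      · rintro (rfl | ⟨ha, -⟩)
        · exact hmem
        · exact ha
  · refine ⟨q, false, hq, fun hc => by simp at hc, ?_⟩
    apply SBT.ext'
    · refine cells_inj W.pos (lamExt_pos V.pos) ?_
      rw [hcellsW, SBT.extend_cells]
    · funext p
      show W.entry p = (if p = q then n + 1 else V.entry p)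
      by_cases hpq : p = q
      · rw [if_pos hpq, hpq, hWq]
      · rw [if_neg hpq]
        by_cases hpV : p ∈ cells V.lam
        · exact hE.2.1 p hpV
        · rw [W.entry_junk p (by rw [hcellsW]; simp [Set.mem_insert_iff, hpq, hpV]),
            V.entry_junk p hpV]
    · rw [SBT.extend_barred]
      simp only [Bool.false_eq_true, if_false, hE.2.2]
      ext a
      simp only [Set.mem_diff, Set.mem_singleton_iff]
      constructor
      · intro ha
        refine ⟨ha, fun hc => hmem (hc ▸ ha)⟩
      · exact fun h => h.1

lemma addable_eq_of_content {lam : List ℕ} (hs : lam.Pairwise (· > ·))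
    (hpos : ∀ p ∈ lam, 0 < p) {q1 q2 : ℕ × ℕ} (h1 : Addable (cells lam) q1)
    (h2 : Addable (cells lam) q2) (h : q1.2 - q1.1 = q2.2 - q2.1) : q1 = q2 := by
  obtain ⟨r1, l1, o1⟩ := addable_row h1
  obtain ⟨r2, l2, o2⟩ := addable_row h2
  have c1 : q1.2 - q1.1 = lam.getD (q1.1 - 1) 0 := by omega
  have c2 : q2.2 - q2.1 = lam.getD (q2.1 - 1) 0 := by omega
  have hg : lam.getD (q1.1 - 1) 0 = lam.getD (q2.1 - 1) 0 := by omega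
  have hfst : q1.1 = q2.1 := by
    rcases Nat.eq_zero_or_pos (lam.getD (q1.1 - 1) 0) with hz | hp
    · have hz2 : lam.getD (q2.1 - 1) 0 = 0 := by omega
      have hL1 : lam.length ≤ q1.1 - 1 := by
        by_contra hc
        have := getD_pos_of_lt hpos (show q1.1 - 1 < lam.length by omega)
        omega
      have hL2 : lam.length ≤ q2.1 - 1 := by
        by_contra hc
        have := getD_pos_of_lt hpos (show q2.1 - 1 < lam.length by omega)
        omega
      omega
    · have hp2 : 0 < lam.getD (q2.1 - 1) 0 := by omega
      have hi1 := lt_length_of_getD_pos hp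
      have hi2 := lt_length_of_getD_pos hp2
      rcases lt_trichotomy q1.1 q2.1 with hlt | heq | hgt
      · have := sorted_getD_lt hs (show q1.1 - 1 < q2.1 - 1 by omega) hi2
        omega
      · exact heq
      · have := sorted_getD_lt hs (show q2.1 - 1 < q1.1 - 1 by omega) hi1
        omega
  have hsnd : q1.2 = q2.2 := by omega
  exact Prod.ext_iff.mpr ⟨hfst, hsnd⟩

/-- The real value of `sqc`. -/
def rsqc (q : ℕ × ℕ) : ℝ :=
  Real.sqrt (((q.2 - q.1 : ℕ) : ℝ) * (((q.2 - q.1 : ℕ) : ℝ) + 1))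

lemma sqc_eq_rsqc (q : ℕ × ℕ) : sqc q = ((rsqc q : ℝ) : ℂ) := rfl

lemma rsqc_nonneg (q : ℕ × ℕ) : 0 ≤ rsqc q := Real.sqrt_nonneg _

lemma rsqc_pos {q : ℕ × ℕ} (h : q.1 ≠ q.2) (hle : q.1 ≤ q.2) : 0 < rsqc q := by
  apply Real.sqrt_pos.2
  have h1 : 1 ≤ q.2 - q.1 := by omega
  have h2 : (1 : ℝ) ≤ ((q.2 - q.1 : ℕ) : ℝ) := by exact_mod_cast h1
  nlinarith

lemma rsqc_inj_content {q1 q2 : ℕ × ℕ} (h : rsqc q1 = rsqc q2) :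
    q1.2 - q1.1 = q2.2 - q2.1 := by
  have h1 := congrArg (· ^ 2) h
  simp only [rsqc] at h1
  rw [Real.sq_sqrt (by positivity), Real.sq_sqrt (by positivity)] at h1
  have h2 : (q1.2 - q1.1) * ((q1.2 - q1.1) + 1) = (q2.2 - q2.1) * ((q2.2 - q2.1) + 1) := by
    exact_mod_cast h1
  nlinarith

lemma kappa_injective {n : ℕ} {V : SBT n} {W1 W2 : SBT (n + 1)} (hE1 : Extends V W1)
    (hE2 : Extends V W2) (hk : W1.kappa (n + 1) = W2.kappa (n + 1)) : W1 = W2 := by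
  obtain ⟨q1, e1, hq1, heps1, rfl⟩ := extends_classify hE1
  obtain ⟨q2, e2, hq2, heps2, rfl⟩ := extends_classify hE2
  rw [SBT.extend_kappa, SBT.extend_kappa, sqc_eq_rsqc, sqc_eq_rsqc] at hk
  have hle1 := (addable_row hq1).2.2
  have hle1' : q1.1 ≤ q1.2 := by have := (addable_row hq1).1; omega
  have hle2' : q2.1 ≤ q2.2 := by have := (addable_row hq2).1; omega
  have hr : rsqc q1 = rsqc q2 ∧ e1 = e2 := by
    cases e1 <;> cases e2 <;>
      simp only [if_true, if_false, Bool.false_eq_true, one_mul, neg_one_mul] at hk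
    · exact ⟨by exact_mod_cast hk, rfl⟩
    · have hxy : rsqc q1 = -rsqc q2 := by exact_mod_cast hk
      have h2pos : 0 < rsqc q2 := rsqc_pos (heps2 rfl) hle2'
      have := rsqc_nonneg q1
      linarith
    · have hxy : -rsqc q1 = rsqc q2 := by exact_mod_cast hk
      have h1pos : 0 < rsqc q1 := rsqc_pos (heps1 rfl) hle1'
      have := rsqc_nonneg q2
      linarith
    · refine ⟨?_, rfl⟩
      have h2 : -rsqc q1 = -rsqc q2 := by exact_mod_cast hk
      linarith
  obtain ⟨hrr, rfl⟩ := hr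
  have hqq : q1 = q2 :=
    addable_eq_of_content V.sorted V.pos hq1 hq2 (rsqc_inj_content hrr)
  subst hqq
  rfl

lemma kappa_mem_bVals {n : ℕ} {V : SBT n} {W : SBT (n + 1)} (hE : Extends V W) :
    W.kappa (n + 1) ∈ bVals (n + 1) (cells V.lam) := by
  obtain ⟨q, eps, hq, heps, rfl⟩ := extends_classify hE
  rw [SBT.extend_kappa]
  obtain ⟨b1, b2, b3⟩ := addable_bounds V.cells_finite hq
  rw [V.cells_ncard] at b3
  apply Finset.mem_biUnion.2
  refine ⟨q, Finset.mem_filter.2 ⟨Finset.mem_product.2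
    ⟨Finset.mem_Icc.2 ⟨b1, by omega⟩, Finset.mem_Icc.2 ⟨by omega, by omega⟩⟩, hq⟩, ?_⟩
  cases eps
  · simp only [Bool.false_eq_true, if_false, one_mul]
    split_ifs with hd <;> simp
  · have hd : q.1 ≠ q.2 := heps rfl
    rw [if_neg hd]
    simp

lemma kappa_surj {n : ℕ} {V : SBT n} {κ : ℂ} (hκ : κ ∈ bVals (n + 1) (cells V.lam)) :
    ∃ W : SBT (n + 1), Extends V W ∧ W.kappa (n + 1) = κ := by
  obtain ⟨q, hqf, hqv⟩ := Finset.mem_biUnion.1 hκ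
  have hq : Addable (cells V.lam) q := (Finset.mem_filter.1 hqf).2
  by_cases hd : q.1 = q.2
  · rw [if_pos hd, Finset.mem_singleton] at hqv
    refine ⟨V.extend q false hq (by simp), V.extend_extends q false hq (by simp), ?_⟩
    rw [SBT.extend_kappa, hqv]
    simp
  · rw [if_neg hd, Finset.mem_insert, Finset.mem_singleton] at hqv
    rcases hqv with h | h
    · refine ⟨V.extend q false hq (by simp), V.extend_extends q false hq (by simp), ?_⟩
      rw [SBT.extend_kappa, h]
      simp
    · refine ⟨V.extend q true hq (fun _ => hd), V.extend_extends q true hq (fun _ => hd), ?_⟩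
      rw [SBT.extend_kappa, h]
      simp

lemma lagrange_prod_eq (s : Finset ℂ) (κ : ℂ) :
    (∏ b ∈ s \ {κ}, (Polynomial.C ((κ - b)⁻¹) * (Polynomial.X - Polynomial.C b)))
      = Lagrange.basis s id κ := by
  rw [Finset.sdiff_singleton_eq_erase]
  unfold Lagrange.basis Lagrange.basisDivisor
  simp

lemma eU_extends {m : ℕ} {V : SBT (m + 1)} {W : SBT (m + 1 + 1)} (hE : Extends V W) :
    eU W = eIn (m + 1 + 1) V *
      Polynomial.aeval (xS (m + 1 + 1) (m + 1 + 1))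
        (Lagrange.basis (bVals (m + 1 + 1) (cells V.lam)) id (W.kappa (m + 1 + 1))) := by
  show eAux (m + 2) W (m + 2) = eIn (m + 2) V *
      Polynomial.aeval (xS (m + 2) (m + 2))
        (Lagrange.basis (bVals (m + 2) (cells V.lam)) id (W.kappa (m + 2)))
  rw [eAux_succ (m + 2) W m, hE.eAux_eq (m + 1) le_rfl, hE.shapeAt_eq (le_refl (m + 1)),
    V.shapeAt_all, lagrange_prod_eq]
  rfl

lemma bVals_nonempty {n : ℕ} (hn : 1 ≤ n) (V : SBT n) :
    (bVals (n + 1) (cells V.lam)).Nonempty := by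
  have hlen : 0 < V.lam.length := by
    by_contra hc
    have heq : V.lam = [] := List.length_eq_zero_iff.1 (by omega)
    have hs := V.sum_eq
    rw [heq] at hs
    simp at hs
    omega
  have hg : 0 < V.lam.getD 0 0 := getD_pos_of_lt V.pos hlen
  have hgn : V.lam.getD 0 0 ≤ n := by
    have hmem : V.lam.getD 0 0 ∈ V.lam := by
      rw [List.getD_eq_getElem _ _ hlen]
      exact List.getElem_mem _
    have h2 := List.single_le_sum (fun x _ => Nat.zero_le x) _ hmem
    have h3 := V.sum_eq
    omega
  have hq : Addable (cells V.lam) (1, V.lam.getD 0 0 + 1) := by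
    constructor
    · intro hc
      obtain ⟨-, -, h3⟩ := mem_cells_mk.1 hc
      rw [show (1 : ℕ) - 1 = 0 from rfl] at h3
      omega
    · refine ⟨?_, ?_, ?_⟩
      · intro p hp
        rcases Set.mem_insert_iff.1 hp with rfl | hp'
        · dsimp only
          omega
        · exact (cells_shifted V.sorted V.pos).1 p hp'
      · intro p hp hlt
        rcases Set.mem_insert_iff.1 hp with rfl | hp'
        · dsimp only
          refine Or.inr (mem_cells_mk.2 ⟨by omega, by omega, ?_⟩)
          rw [show (1 : ℕ) - 1 = 0 from rfl]
          omega
        · exact Or.inr ((cells_shifted V.sorted V.pos).2.1 p hp' hlt)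
      · intro p hp hlt
        rcases Set.mem_insert_iff.1 hp with rfl | hp'
        · dsimp only at hlt
          omega
        · exact Or.inr ((cells_shifted V.sorted V.pos).2.2 p hp' hlt)
  refine ⟨sqc (1, V.lam.getD 0 0 + 1), Finset.mem_biUnion.2
    ⟨(1, V.lam.getD 0 0 + 1), Finset.mem_filter.2 ⟨Finset.mem_product.2
      ⟨Finset.mem_Icc.2 ⟨le_refl 1, by omega⟩, Finset.mem_Icc.2 ⟨by omega, by omega⟩⟩, hq⟩, ?_⟩⟩
  split_ifs <;> simp

/-- Branching rule: for a standard barred tableau `V` with `n` boxes, viewed inside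
`S_{n+1}`, one has `e_V = Σ_W e_W`, the sum over all standard barred tableaux `W`
with `n+1` boxes obtained from `V` by adding one box containing `n+1` or `n+1` barred. -/
theorem statement6 (n : ℕ) (hn : 1 ≤ n) (V : SBT n) :
    eIn (n + 1) V = ∑ᶠ (W : SBT (n + 1)) (_ : Extends V W), eU W := by
  obtain ⟨m, rfl⟩ : ∃ m, n = m + 1 := ⟨n - 1, by omega⟩
  classical
  set s : Finset ℂ := bVals (m + 1 + 1) (cells V.lam) with hs_def
  have hEfin : {W : SBT (m + 1 + 1) | Extends V W}.Finite := by
    have himg : (fun W : SBT (m + 1 + 1) => W.kappa (m + 1 + 1)) '' {W | Extends V W}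
        ⊆ ↑s := by
      rintro x ⟨W, hW, rfl⟩
      exact kappa_mem_bVals hW
    exact Set.Finite.of_finite_image (s.finite_toSet.subset himg)
      (fun W1 h1 W2 h2 hk => kappa_injective h1 h2 hk)
  have e0 : (∑ᶠ (W : SBT (m + 1 + 1)) (_ : Extends V W), eU W)
      = ∑ᶠ (W : SBT (m + 1 + 1)) (_ : W ∈ {W : SBT (m + 1 + 1) | Extends V W}), eU W := rfl
  rw [e0, finsum_mem_eq_finite_toFinset_sum _ hEfin]
  have e1 : ∑ W ∈ hEfin.toFinset, eU W
      = ∑ κ ∈ s, eIn (m + 1 + 1) V *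
          Polynomial.aeval (xS (m + 1 + 1) (m + 1 + 1)) (Lagrange.basis s id κ) := by
    refine Finset.sum_bij (fun W _ => W.kappa (m + 1 + 1)) ?_ ?_ ?_ ?_
    · intro W hW
      exact kappa_mem_bVals (hEfin.mem_toFinset.1 hW)
    · intro W1 h1 W2 h2 hk
      exact kappa_injective (hEfin.mem_toFinset.1 h1) (hEfin.mem_toFinset.1 h2) hk
    · intro κ hκ
      obtain ⟨W, hW, hWk⟩ := kappa_surj (V := V) hκ
      exact ⟨W, hEfin.mem_toFinset.2 hW, hWk⟩
    · intro W hW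
      exact eU_extends (hEfin.mem_toFinset.1 hW)
  rw [e1, ← Finset.mul_sum, ← map_sum,
    Lagrange.sum_basis (Function.injective_id.injOn) (bVals_nonempty (by omega) V),
    map_one, mul_one]
end
end

section
/- For a ≠ b and u, v ∈ ℂ with u² ≠ v², one has φ_{ab}(u,v) · φ_{ba}(v,u) = A(u,v) · 1 in the Sergeev superalgebra S_n, where A(u,v) = 1 − 1/(u−v)² − 1/(u+v)². -/
open scoped Classical

noncomputable section

/-- The rational function `φ_{ab}(u,v) = 1 + t_{ab} √2 (u c_a - v c_b)/(u² - v²)`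
with values in `S_n`. -/
def phiF (n a b : ℕ) (u v : ℂ) : Sergeev n :=
  1 + ((Real.sqrt 2 : ℂ) / (u ^ 2 - v ^ 2)) • (tsgn n a b * (u • cS n a - v • cS n b))

/-- `A(u,v) = 1 - 1/(u-v)² - 1/(u+v)²`. -/
def Afun (u v : ℂ) : ℂ := 1 - 1 / (u - v) ^ 2 - 1 / (u + v) ^ 2

section AuxLemmas

variable {n : ℕ}

lemma sneg_mul (x y : Sergeev n) : -x * y = -(x * y) := neg_mul x y

lemma smul_neg'' (x y : Sergeev n) : x * -y = -(x * y) := mul_neg x y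

lemma sneg_neg (x : Sergeev n) : - -x = x := neg_neg x

lemma mk_rel {x y : FreeAlgebra ℂ (SGen n)} (h : SRel n x y) :
    RingQuot.mkAlgHom ℂ (SRel n) x = RingQuot.mkAlgHom ℂ (SRel n) y :=
  RingQuot.mkAlgHom_rel ℂ h

lemma tS_sq (a : ℕ) (h1 : 1 ≤ a) (h2 : a < n) : tS n a * tS n a = 1 := by
  have h := mk_rel (SRel.tsq a h1 h2)
  simpa [tS, map_mul, map_one] using h

lemma cS_sq (a : ℕ) (h1 : 1 ≤ a) (h2 : a ≤ n) : cS n a * cS n a = -1 := by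
  have h := mk_rel (SRel.csq a h1 h2)
  simpa [cS, map_mul, map_one, map_neg] using h

lemma cS_anti (a b : ℕ) (h1 : 1 ≤ a) (h2 : a ≤ n) (h3 : 1 ≤ b) (h4 : b ≤ n) (h5 : a ≠ b) :
    cS n a * cS n b = -(cS n b * cS n a) := by
  have h := mk_rel (SRel.canti a b h1 h2 h3 h4 h5)
  simpa [cS, map_mul, map_neg] using h

lemma tS_cS (a b : ℕ) (h1 : 1 ≤ a) (h2 : a < n) (h3 : 1 ≤ b) (h4 : b ≤ n) :
    tS n a * cS n b = -(cS n b * tS n a) := by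
  have h := mk_rel (SRel.tc a b h1 h2 h3 h4)
  simpa [tS, cS, map_mul, map_neg] using h

lemma cS_tS (a b : ℕ) (h1 : 1 ≤ a) (h2 : a < n) (h3 : 1 ≤ b) (h4 : b ≤ n) :
    cS n b * tS n a = -(tS n a * cS n b) := by
  rw [tS_cS a b h1 h2 h3 h4, neg_neg]

lemma prod_reverse_cancel {M : Type*} [Monoid M] :
    ∀ (l : List M), (∀ x ∈ l, x * x = 1) → l.prod * l.reverse.prod = 1
  | [], _ => by simp
  | x :: xs, h => by
    have hx := h x List.mem_cons_self
    have ih := prod_reverse_cancel xs (fun y hy => h y (List.mem_cons_of_mem x hy))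
    calc (x :: xs).prod * (x :: xs).reverse.prod
        = x * ((xs.prod * xs.reverse.prod) * x) := by
          simp [List.prod_append, mul_assoc]
      _ = 1 := by rw [ih, one_mul, hx]

lemma prod_anticomm {R : Type*} [Ring R] (c : R) :
    ∀ (l : List R), (∀ x ∈ l, c * x = -(x * c)) →
      c * l.prod = (-1 : R) ^ l.length * (l.prod * c)
  | [], _ => by simp
  | x :: xs, h => by
    have hx := h x List.mem_cons_self
    have ih := prod_anticomm c xs (fun y hy => h y (List.mem_cons_of_mem x hy))
    have hcomm : x * ((-1 : R) ^ xs.length) = ((-1 : R) ^ xs.length) * x :=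
      ((Commute.neg_one_left x).pow_left xs.length).eq.symm
    calc c * (x :: xs).prod = (c * x) * xs.prod := by rw [List.prod_cons, ← mul_assoc]
      _ = -(x * (c * xs.prod)) := by rw [hx, neg_mul, mul_assoc]
      _ = -(x * ((-1 : R) ^ xs.length * (xs.prod * c))) := by rw [ih]
      _ = (-1 : R) ^ (x :: xs).length * ((x :: xs).prod * c) := by
          rw [List.length_cons, List.prod_cons, pow_succ, ← mul_assoc x, hcomm]
          simp only [mul_assoc, mul_neg, neg_mul, mul_one, neg_neg]

lemma mem_w {a b k : ℕ} (hk : k ∈ List.range' (a + 1) (b - 1 - a)) (hab : a < b) :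
    1 ≤ k ∧ k < b := by
  rw [List.mem_range'_1] at hk
  omega

lemma ttS_sq (a b : ℕ) (h1 : 1 ≤ a) (hab : a < b) (hb : b ≤ n) :
    ttS n a b * ttS n a b = 1 := by
  set w : List (Sergeev n) := (List.range' (a + 1) (b - 1 - a)).map (tS n) with hw
  have hsq : ∀ x ∈ w, x * x = 1 := by
    intro x hx
    rw [hw, List.mem_map] at hx
    obtain ⟨k, hk, rfl⟩ := hx
    obtain ⟨hk1, hk2⟩ := mem_w hk hab
    exact tS_sq k hk1 (by omega)
  have hsqr : ∀ x ∈ w.reverse, x * x = 1 := fun x hx => hsq x (List.mem_reverse.mp hx)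
  have hPR : w.prod * w.reverse.prod = 1 := prod_reverse_cancel w hsq
  have hRP : w.reverse.prod * w.prod = 1 := by
    have := prod_reverse_cancel w.reverse hsqr
    rwa [List.reverse_reverse] at this
  have hta : tS n a * tS n a = 1 := tS_sq a h1 (by omega)
  have hM : (w.reverse.prod * tS n a * w.prod) * (w.reverse.prod * tS n a * w.prod) = 1 := by
    have h1' : (w.reverse.prod * tS n a * w.prod) * (w.reverse.prod * tS n a * w.prod)
        = w.reverse.prod * (tS n a * ((w.prod * w.reverse.prod) * (tS n a * w.prod))) := by
      simp only [mul_assoc]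
    rw [h1', hPR, one_mul, ← mul_assoc (tS n a), hta, one_mul, hRP]
  rw [ttS, List.map_reverse, ← hw, smul_mul_smul_comm, hM, ← pow_add,
    Even.neg_one_pow (⟨b - a - 1, rfl⟩ : Even (b - a - 1 + (b - a - 1))), one_smul]

lemma cS_ttS (a b m : ℕ) (h1 : 1 ≤ a) (hab : a < b) (hb : b ≤ n) (hm1 : 1 ≤ m) (hm2 : m ≤ n) :
    cS n m * ttS n a b = -(ttS n a b * cS n m) := by
  set w : List (Sergeev n) := (List.range' (a + 1) (b - 1 - a)).map (tS n) with hw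
  have hac : ∀ x ∈ w, cS n m * x = -(x * cS n m) := by
    intro x hx
    rw [hw, List.mem_map] at hx
    obtain ⟨k, hk, rfl⟩ := hx
    obtain ⟨hk1, hk2⟩ := mem_w hk hab
    exact cS_tS k m hk1 (by omega) hm1 hm2
  have hacr : ∀ x ∈ w.reverse, cS n m * x = -(x * cS n m) :=
    fun x hx => hac x (List.mem_reverse.mp hx)
  have hR := prod_anticomm (cS n m) w.reverse hacr
  have hP := prod_anticomm (cS n m) w hac
  rw [List.length_reverse] at hR
  have hta : cS n m * tS n a = -(tS n a * cS n m) := cS_tS a m h1 (by omega) hm1 hm2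
  set L := w.length with hL
  set ε : Sergeev n := (-1 : Sergeev n) ^ L with hε
  have hεc' : ∀ y z : Sergeev n, y * (ε * z) = ε * (y * z) := by
    intro y z
    rw [← mul_assoc, ← ((Commute.neg_one_left y).pow_left L).eq, mul_assoc]
  have hεε : ε * ε = 1 := by
    rw [hε, ← pow_add]
    exact Even.neg_one_pow (α := Sergeev n) (⟨L, rfl⟩ : Even (L + L))
  have key : cS n m * (w.reverse.prod * tS n a * w.prod)
      = -((w.reverse.prod * tS n a * w.prod) * cS n m) := by
    calc cS n m * (w.reverse.prod * tS n a * w.prod)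
        = (cS n m * w.reverse.prod) * (tS n a * w.prod) := by simp only [mul_assoc]
      _ = ε * (w.reverse.prod * ((cS n m * tS n a) * w.prod)) := by
          rw [hR]; simp only [mul_assoc]
      _ = ε * (w.reverse.prod * (-(tS n a * (cS n m * w.prod)))) := by
          rw [hta, sneg_mul, mul_assoc]
      _ = ε * (w.reverse.prod * (-(tS n a * (ε * (w.prod * cS n m))))) := by rw [hP]
      _ = -((ε * ε) * (w.reverse.prod * (tS n a * (w.prod * cS n m)))) := by
          rw [hεc' (tS n a), smul_neg'' w.reverse.prod, hεc' w.reverse.prod,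
            smul_neg'' ε, ← mul_assoc ε ε]
      _ = -((w.reverse.prod * tS n a * w.prod) * cS n m) := by
          rw [hεε, one_mul]; simp only [mul_assoc]
  rw [ttS, List.map_reverse, ← hw, mul_smul_comm, smul_mul_assoc, key]
  exact smul_neg _ _

lemma tsgn_swap (a b : ℕ) (hab : a ≠ b) : tsgn n b a = -tsgn n a b := by
  rcases lt_or_gt_of_ne hab with h | h
  · rw [tsgn, tsgn, if_neg (by omega), if_pos h, if_pos h]
  · rw [tsgn, tsgn, if_pos h, if_neg (by omega), if_pos h, neg_neg]

lemma tsgn_sq (a b : ℕ) (h1 : 1 ≤ a) (h2 : a ≤ n) (h3 : 1 ≤ b) (h4 : b ≤ n) (hab : a ≠ b) :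
    tsgn n a b * tsgn n a b = 1 := by
  rcases lt_or_gt_of_ne hab with h | h
  · rw [tsgn, if_pos h]; exact ttS_sq a b h1 h h4
  · rw [tsgn, if_neg (by omega), if_pos h, sneg_mul, smul_neg'', sneg_neg]
    exact ttS_sq b a h3 h h2

lemma cS_tsgn (a b m : ℕ) (h1 : 1 ≤ a) (h2 : a ≤ n) (h3 : 1 ≤ b) (h4 : b ≤ n) (hab : a ≠ b)
    (hm1 : 1 ≤ m) (hm2 : m ≤ n) : cS n m * tsgn n a b = -(tsgn n a b * cS n m) := by
  rcases lt_or_gt_of_ne hab with h | h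
  · rw [tsgn, if_pos h]; exact cS_ttS a b m h1 h h4 hm1 hm2
  · rw [tsgn, if_neg (by omega), if_pos h, smul_neg'', sneg_mul, sneg_neg,
      cS_ttS b a m h3 h h2 hm1 hm2, sneg_neg]

end AuxLemmas

section MainAux

variable {n : ℕ}

lemma sadd_mul (x y z : Sergeev n) : (x + y) * z = x * z + y * z := add_mul x y z
lemma smul_sub2 (x y z : Sergeev n) : x * (y - z) = x * y - x * z := mul_sub x y z
lemma ssub_mul (x y z : Sergeev n) : (x - y) * z = x * z - y * z := sub_mul x y z
lemma sone_mul (x : Sergeev n) : 1 * x = x := one_mul x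
lemma smul_one2 (x : Sergeev n) : x * 1 = x := mul_one x
lemma ssmul_mul (r : ℂ) (x y : Sergeev n) : (r • x) * y = r • (x * y) := smul_mul_assoc r x y
lemma smul_smul2 (r : ℂ) (x y : Sergeev n) : x * (r • y) = r • (x * y) := mul_smul_comm r x y

end MainAux

/-- `φ_{ab}(u,v) φ_{ba}(v,u) = A(u,v)` in the Sergeev superalgebra `S_n`. -/
theorem statement14 (n a b : ℕ) (ha1 : 1 ≤ a) (ha2 : a ≤ n) (hb1 : 1 ≤ b) (hb2 : b ≤ n)
    (hab : a ≠ b) (u v : ℂ) (huv : u ^ 2 ≠ v ^ 2) :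
    phiF n a b u v * phiF n b a v u = algebraMap ℂ (Sergeev n) (Afun u v) := by
  have hT : tsgn n a b * tsgn n a b = 1 := tsgn_sq a b ha1 ha2 hb1 hb2 hab
  have hcaT : cS n a * tsgn n a b = -(tsgn n a b * cS n a) :=
    cS_tsgn a b a ha1 ha2 hb1 hb2 hab ha1 ha2
  have hcbT : cS n b * tsgn n a b = -(tsgn n a b * cS n b) :=
    cS_tsgn a b b ha1 ha2 hb1 hb2 hab hb1 hb2
  have hcc : cS n a * cS n b = -(cS n b * cS n a) := cS_anti a b ha1 ha2 hb1 hb2 hab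
  have hcaa : cS n a * cS n a = -1 := cS_sq a ha1 ha2
  have hcbb : cS n b * cS n b = -1 := cS_sq b hb1 hb2
  have hTX : tsgn n a b * (u • cS n a - v • cS n b)
      = u • (tsgn n a b * cS n a) - v • (tsgn n a b * cS n b) := by
    rw [smul_sub2, smul_smul2, smul_smul2]
  have hXT : (u • cS n a - v • cS n b) * tsgn n a b
      = -(tsgn n a b * (u • cS n a - v • cS n b)) := by
    rw [ssub_mul, ssmul_mul, ssmul_mul, hcaT, hcbT, hTX]
    module
  have hXX : (u • cS n a - v • cS n b) * (u • cS n a - v • cS n b)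
      = (-(u ^ 2 + v ^ 2)) • (1 : Sergeev n) := by
    rw [ssub_mul, smul_sub2, smul_sub2, smul_mul_smul_comm, smul_mul_smul_comm,
      smul_mul_smul_comm, smul_mul_smul_comm, hcaa, hcbb, hcc]
    module
  have hM : (tsgn n a b * (u • cS n a - v • cS n b)) *
        (tsgn n a b * (u • cS n a - v • cS n b))
      = (u ^ 2 + v ^ 2) • (1 : Sergeev n) := by
    have h1 : (tsgn n a b * (u • cS n a - v • cS n b)) *
          (tsgn n a b * (u • cS n a - v • cS n b))
        = tsgn n a b *
            (((u • cS n a - v • cS n b) * tsgn n a b) * (u • cS n a - v • cS n b)) := by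
      simp only [mul_assoc]
    rw [h1, hXT, sneg_mul, smul_neg'', ← mul_assoc, ← mul_assoc, hT, sone_mul, hXX]
    module
  have hphi2 : phiF n b a v u
      = 1 - ((Real.sqrt 2 : ℂ) / (u ^ 2 - v ^ 2)) •
          (tsgn n a b * (u • cS n a - v • cS n b)) := by
    rw [phiF, tsgn_swap a b hab]
    have hc : (Real.sqrt 2 : ℂ) / (v ^ 2 - u ^ 2)
        = -((Real.sqrt 2 : ℂ) / (u ^ 2 - v ^ 2)) := by
      rw [show (v ^ 2 - u ^ 2 : ℂ) = -(u ^ 2 - v ^ 2) by ring, div_neg]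
    have hY : v • cS n b - u • cS n a = -(u • cS n a - v • cS n b) := by module
    rw [hc, sneg_mul, hY, smul_neg'', sneg_neg]
    module
  have hphi1 : phiF n a b u v
      = 1 + ((Real.sqrt 2 : ℂ) / (u ^ 2 - v ^ 2)) •
          (tsgn n a b * (u • cS n a - v • cS n b)) := rfl
  have hexp : ∀ y : Sergeev n, (1 + y) * (1 - y) = 1 - y * y := by
    intro y
    rw [sadd_mul, smul_sub2, smul_sub2]
    simp only [sone_mul, smul_one2]
    abel
  rw [hphi1, hphi2, hexp, smul_mul_smul_comm, hM, Algebra.algebraMap_eq_smul_one]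
  have hval : Afun u v = 1 - ((Real.sqrt 2 : ℂ) / (u ^ 2 - v ^ 2)) *
      ((Real.sqrt 2 : ℂ) / (u ^ 2 - v ^ 2)) * (u ^ 2 + v ^ 2) := by
    have hd : u ^ 2 - v ^ 2 ≠ 0 := sub_ne_zero.mpr huv
    have hfac : (u - v) * (u + v) ≠ 0 := by
      rw [show (u - v) * (u + v) = u ^ 2 - v ^ 2 by ring]; exact hd
    obtain ⟨h1, h2⟩ := mul_ne_zero_iff.mp hfac
    have hsq : (Real.sqrt 2 : ℂ) * (Real.sqrt 2 : ℂ) = 2 := by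
      rw [← Complex.ofReal_mul, Real.mul_self_sqrt (by norm_num)]
      norm_num
    rw [Afun, div_mul_div_comm, hsq]
    field_simp
    ring
  rw [hval]
  module
end
end

section
/- Branching ratio identities: let μ = (μ_1 > ⋯ > μ_m > 0) be a strict partition of n−1. (i) If 1 ≤ k ≤ m and the sequence λ obtained from μ by replacing μ_k with μ_k + 1 is again a strict partition (of n), then (μ_k + 1) · ∏_{a=1, a≠k}^{m} (μ_k(μ_k+1) − μ_a(μ_a+1))/(μ_k(μ_k+1) − μ_a(μ_a−1)) = n g_μ / g_λ. (ii) If μ_m ≥ 2 and λ = (μ_1,…,μ_m,1), then ∏_{a=1}^{m} (μ_a + 1)/(μ_a − 1) = n g_μ / g_λ. -/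
noncomputable section

/-- The number `g_λ` of standard shifted `λ`-tableaux, by the Schur formula
`g_λ = n!/(λ_1!⋯λ_ℓ!) ∏_{i<j} (λ_i-λ_j)/(λ_i+λ_j)` (as a rational number). -/
def gQ (lam : List ℕ) : ℚ :=
  (Nat.factorial lam.sum : ℚ) / (((lam.map Nat.factorial).prod : ℕ) : ℚ) *
    ∏ i ∈ Finset.range lam.length, ∏ j ∈ Finset.range lam.length,
      if i < j then
        ((lam.getD i 0 : ℚ) - (lam.getD j 0 : ℚ)) / ((lam.getD i 0 : ℚ) + (lam.getD j 0 : ℚ))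
      else 1

namespace St19aux

def t (f : ℕ → ℚ) (i j : ℕ) : ℚ := if i < j then (f i - f j) / (f i + f j) else 1

def DQ (m : ℕ) (f : ℕ → ℚ) : ℚ := ∏ i ∈ Finset.range m, ∏ j ∈ Finset.range m, t f i j

lemma list_sum_range (l : List ℕ) : l.sum = ∑ i ∈ Finset.range l.length, l.getD i 0 := by
  induction l with
  | nil => simp
  | cons a tl ih =>
    simp only [List.length_cons, Finset.sum_range_succ', List.sum_cons]
    simp [ih, Nat.add_comm]

lemma list_prod_range {M : Type*} [CommMonoid M] (l : List ℕ) (g : ℕ → M) :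
    (l.map g).prod = ∏ i ∈ Finset.range l.length, g (l.getD i 0) := by
  induction l with
  | nil => simp
  | cons a tl ih =>
    simp only [List.length_cons, Finset.prod_range_succ', List.map_cons, List.prod_cons]
    simp [ih, mul_comm]

lemma gQ_eq (lam : List ℕ) :
    gQ lam = (Nat.factorial lam.sum : ℚ)
        / (∏ i ∈ Finset.range lam.length, ((lam.getD i 0).factorial : ℚ))
        * DQ lam.length (fun i => (lam.getD i 0 : ℚ)) := by
  unfold gQ DQ t
  rw [list_prod_range lam Nat.factorial, Nat.cast_prod]

lemma DQ_split (m k : ℕ) (hk : k < m) (f : ℕ → ℚ) :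
    DQ m f = ((∏ j ∈ Finset.range m, t f k j) * ∏ i ∈ Finset.range m, t f i k) *
      ∏ p ∈ (Finset.range m ×ˢ Finset.range m).filter (fun p => p.1 ≠ k ∧ p.2 ≠ k),
        t f p.1 p.2 := by
  have h0 : DQ m f = ∏ p ∈ Finset.range m ×ˢ Finset.range m, t f p.1 p.2 := by
    rw [Finset.prod_product]
    rfl
  rw [h0, ← Finset.prod_filter_mul_prod_filter_not (Finset.range m ×ˢ Finset.range m)
    (fun p => p.1 = k ∨ p.2 = k)]
  congr 1
  · have hset : (Finset.range m ×ˢ Finset.range m).filter (fun p => p.1 = k ∨ p.2 = k)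
        = ({k} ×ˢ Finset.range m) ∪ (Finset.range m ×ˢ {k}) := by
      ext ⟨i, j⟩
      simp only [Finset.mem_filter, Finset.mem_product, Finset.mem_union, Finset.mem_singleton,
        Finset.mem_range]
      constructor
      · rintro ⟨⟨hi, hj⟩, h | h⟩
        · exact Or.inl ⟨h, hj⟩
        · exact Or.inr ⟨hi, h⟩
      · rintro (⟨h, hj⟩ | ⟨hi, h⟩)
        · exact ⟨⟨h ▸ hk, hj⟩, Or.inl h⟩
        · exact ⟨⟨hi, h ▸ hk⟩, Or.inr h⟩
    have hinter : (({k} : Finset ℕ) ×ˢ Finset.range m) ∩ (Finset.range m ×ˢ {k})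
        = ({k} : Finset ℕ) ×ˢ ({k} : Finset ℕ) := by
      ext ⟨i, j⟩
      simp only [Finset.mem_inter, Finset.mem_product, Finset.mem_singleton, Finset.mem_range]
      constructor
      · rintro ⟨⟨h1, _⟩, _, h2⟩; exact ⟨h1, h2⟩
      · rintro ⟨h1, h2⟩; exact ⟨⟨h1, h2 ▸ hk⟩, h1 ▸ hk, h2⟩
    rw [hset]
    have := Finset.prod_union_inter (s₁ := ({k} : Finset ℕ) ×ˢ Finset.range m)
      (s₂ := Finset.range m ×ˢ {k}) (f := fun p => t f p.1 p.2)
    rw [hinter] at this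
    have hkk : ∏ p ∈ ({k} : Finset ℕ) ×ˢ ({k} : Finset ℕ), t f p.1 p.2 = 1 := by
      simp [t]
    rw [hkk, mul_one] at this
    rw [this]
    congr 1
    · rw [Finset.prod_product]; simp
    · rw [Finset.prod_product]; simp
  · apply Finset.prod_congr
    · ext p; simp only [Finset.mem_filter]; tauto
    · intros; rfl

lemma aux_gt (x y : ℚ) (hy : 0 < y) (hxy : y < x) :
    ((x * (x + 1) - y * (y + 1)) / (x * (x + 1) - y * (y - 1))) * ((x + 1 - y) / (x + 1 + y))
      = (x - y) / (x + y) := by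
  have h1 : x * (x + 1) - y * (y - 1) = (x + y) * (x - y + 1) := by ring
  have hxy0 : 0 < x + y := by linarith
  have h2 : x * (x + 1) - y * (y - 1) ≠ 0 := by
    rw [h1]
    exact ne_of_gt (mul_pos hxy0 (by linarith))
  have h3 : x + 1 + y ≠ 0 := ne_of_gt (by linarith)
  have h4 : (x + y : ℚ) ≠ 0 := ne_of_gt hxy0
  field_simp
  ring

lemma aux_lt (x y : ℚ) (hx : 0 < x) (hxy : x + 1 < y) :
    ((x * (x + 1) - y * (y + 1)) / (x * (x + 1) - y * (y - 1))) * ((y - (x + 1)) / (y + (x + 1)))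
      = (y - x) / (y + x) := by
  have h1 : x * (x + 1) - y * (y - 1) = (x + y) * (x - y + 1) := by ring
  have hxy0 : 0 < x + y := by linarith
  have h2 : x * (x + 1) - y * (y - 1) ≠ 0 := by
    rw [h1]
    have : x - y + 1 < 0 := by linarith
    exact mul_ne_zero (ne_of_gt hxy0) (ne_of_lt this)
  have h3 : y + (x + 1) ≠ 0 := ne_of_gt (by linarith)
  have h4 : (y + x : ℚ) ≠ 0 := ne_of_gt (by linarith)
  field_simp
  ring

lemma DQ_ne_zero (m : ℕ) (f : ℕ → ℚ) (hpos : ∀ i, i < m → 0 < f i)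
    (hsort : ∀ i j, i < j → j < m → f j < f i) : DQ m f ≠ 0 := by
  unfold DQ
  rw [Finset.prod_ne_zero_iff]
  intro i hi
  rw [Finset.prod_ne_zero_iff]
  intro j hj
  rw [Finset.mem_range] at hi hj
  unfold t
  split
  · next h =>
    apply div_ne_zero
    · have := hsort i j h hj; linarith
    · have := hpos i hi; have := hpos j hj; positivity
  · exact one_ne_zero

lemma key1 (m k : ℕ) (hk : k < m) (f g : ℕ → ℚ)
    (hgk : g k = f k + 1) (hfg : ∀ i, i ≠ k → g i = f i)
    (hpos : ∀ i, i < m → 0 < f i)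
    (hlt : ∀ a, a < m → k < a → f a < f k)
    (hgt : ∀ a, a < k → f k + 1 < f a) :
    (∏ a ∈ Finset.range m, (if a = k then 1 else
        (f k * (f k + 1) - f a * (f a + 1)) / (f k * (f k + 1) - f a * (f a - 1)))) * DQ m g
      = DQ m f := by
  rw [DQ_split m k hk f, DQ_split m k hk g]
  have hC : ∏ p ∈ (Finset.range m ×ˢ Finset.range m).filter (fun p => p.1 ≠ k ∧ p.2 ≠ k),
      t g p.1 p.2
      = ∏ p ∈ (Finset.range m ×ˢ Finset.range m).filter (fun p => p.1 ≠ k ∧ p.2 ≠ k),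
        t f p.1 p.2 := by
    apply Finset.prod_congr rfl
    intro p hp
    rw [Finset.mem_filter] at hp
    unfold t
    rw [hfg _ hp.2.1, hfg _ hp.2.2]
  rw [hC]
  have hmain : (∏ a ∈ Finset.range m, (if a = k then 1 else
        (f k * (f k + 1) - f a * (f a + 1)) / (f k * (f k + 1) - f a * (f a - 1)))) *
      ((∏ j ∈ Finset.range m, t g k j) * ∏ i ∈ Finset.range m, t g i k)
      = (∏ j ∈ Finset.range m, t f k j) * ∏ i ∈ Finset.range m, t f i k := by
    rw [← Finset.prod_mul_distrib, ← Finset.prod_mul_distrib, ← Finset.prod_mul_distrib]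
    apply Finset.prod_congr rfl
    intro a ha
    rw [Finset.mem_range] at ha
    rcases lt_trichotomy a k with h | h | h
    · -- a < k
      have hne : a ≠ k := ne_of_lt h
      rw [if_neg hne]
      unfold t
      rw [if_neg (by omega : ¬ k < a), if_neg (by omega : ¬ k < a),
        if_pos h, if_pos h, hgk, hfg a hne]
      rw [one_mul, one_mul]
      exact aux_lt (f k) (f a) (hpos k hk) (hgt a h)
    · -- a = k
      subst h
      rw [if_pos rfl]
      unfold t
      simp
    · -- k < a
      have hne : a ≠ k := ne_of_gt h
      rw [if_neg hne]
      unfold t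
      rw [if_neg (by omega : ¬ a < k), if_neg (by omega : ¬ a < k),
        if_pos h, if_pos h, hgk, hfg a hne]
      rw [mul_one, mul_one]
      exact aux_gt (f k) (f a) (hpos a ha) (hlt a ha h)
  calc (∏ a ∈ Finset.range m, (if a = k then 1 else
        (f k * (f k + 1) - f a * (f a + 1)) / (f k * (f k + 1) - f a * (f a - 1)))) *
      (((∏ j ∈ Finset.range m, t g k j) * ∏ i ∈ Finset.range m, t g i k) *
        ∏ p ∈ (Finset.range m ×ˢ Finset.range m).filter (fun p => p.1 ≠ k ∧ p.2 ≠ k),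
          t f p.1 p.2)
      = ((∏ a ∈ Finset.range m, (if a = k then 1 else
        (f k * (f k + 1) - f a * (f a + 1)) / (f k * (f k + 1) - f a * (f a - 1)))) *
      ((∏ j ∈ Finset.range m, t g k j) * ∏ i ∈ Finset.range m, t g i k)) *
        ∏ p ∈ (Finset.range m ×ˢ Finset.range m).filter (fun p => p.1 ≠ k ∧ p.2 ≠ k),
          t f p.1 p.2 := by ring
    _ = _ := by rw [hmain]

lemma DQ_succ (m : ℕ) (f g : ℕ → ℚ) (hfg : ∀ i, i < m → g i = f i) (hgm : g m = 1) :
    DQ (m + 1) g = DQ m f * ∏ i ∈ Finset.range m, (f i - 1) / (f i + 1) := by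
  unfold DQ
  rw [Finset.prod_range_succ]
  have hlast : ∏ j ∈ Finset.range (m + 1), t g m j = 1 := by
    apply Finset.prod_eq_one
    intro j hj
    rw [Finset.mem_range] at hj
    unfold t
    rw [if_neg (by omega)]
  rw [hlast, mul_one]
  rw [← Finset.prod_mul_distrib]
  apply Finset.prod_congr rfl
  intro i hi
  rw [Finset.mem_range] at hi
  rw [Finset.prod_range_succ]
  congr 1
  · apply Finset.prod_congr rfl
    intro j hj
    rw [Finset.mem_range] at hj
    unfold t
    split
    · rw [hfg i hi, hfg j hj]
    · rfl
  · unfold t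
    rw [if_pos hi, hfg i hi, hgm]

end St19aux

open St19aux

/-- Branching ratio identities, for a strict partition `μ = (μ_1 > ⋯ > μ_m > 0)` of
`n - 1` (so `n = μ_1 + ⋯ + μ_m + 1`):
(i) if replacing `μ_k` by `μ_k + 1` yields a strict partition `λ` of `n`, then
`(μ_k + 1) ∏_{a≠k} (μ_k(μ_k+1) - μ_a(μ_a+1))/(μ_k(μ_k+1) - μ_a(μ_a-1)) = n g_μ / g_λ`;
(ii) if `μ_m ≥ 2` and `λ = (μ_1, …, μ_m, 1)`, then
`∏_a (μ_a+1)/(μ_a-1) = n g_μ / g_λ`. -/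
theorem statement19 (mu : List ℕ) (hs : mu.Pairwise (· > ·)) (hp : ∀ p ∈ mu, 0 < p)
    (hm : 1 ≤ mu.length) :
    (∀ k : ℕ, 1 ≤ k → k ≤ mu.length →
      ((mu.set (k - 1) (mu.getD (k - 1) 0 + 1)).Pairwise (· > ·)) →
      ((mu.getD (k - 1) 0 : ℚ) + 1) *
        ∏ a ∈ Finset.range mu.length,
          (if a = k - 1 then 1 else
            ((mu.getD (k - 1) 0 : ℚ) * ((mu.getD (k - 1) 0 : ℚ) + 1)
                - (mu.getD a 0 : ℚ) * ((mu.getD a 0 : ℚ) + 1)) /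
              ((mu.getD (k - 1) 0 : ℚ) * ((mu.getD (k - 1) 0 : ℚ) + 1)
                - (mu.getD a 0 : ℚ) * ((mu.getD a 0 : ℚ) - 1)))
        = ((mu.sum : ℚ) + 1) * gQ mu / gQ (mu.set (k - 1) (mu.getD (k - 1) 0 + 1))) ∧
    (2 ≤ mu.getD (mu.length - 1) 0 →
      (∏ a ∈ Finset.range mu.length, ((mu.getD a 0 : ℚ) + 1) / ((mu.getD a 0 : ℚ) - 1))
        = ((mu.sum : ℚ) + 1) * gQ mu / gQ (mu ++ [1])) := by
  classical
  set m := mu.length with hmdef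
  have hpN : ∀ i, i < m → 0 < mu.getD i 0 := by
    intro i hi
    rw [List.getD_eq_getElem mu 0 hi]
    exact hp _ (List.getElem_mem hi)
  have hsN : ∀ i j, i < j → j < m → mu.getD j 0 < mu.getD i 0 := by
    intro i j hij hj
    rw [List.getD_eq_getElem mu 0 hj, List.getD_eq_getElem mu 0 (lt_trans hij hj)]
    exact List.pairwise_iff_getElem.mp hs i j _ _ hij
  have hfpos : ∀ i, i < m → 0 < ((mu.getD i 0 : ℚ)) := by
    intro i hi; exact_mod_cast hpN i hi
  have hfsort : ∀ i j, i < j → j < m → ((mu.getD j 0 : ℚ)) < (mu.getD i 0 : ℚ) := by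
    intro i j hij hj; exact_mod_cast hsN i j hij hj
  have hPmu : (∏ i ∈ Finset.range m, ((mu.getD i 0).factorial : ℚ)) ≠ 0 := by
    apply Finset.prod_ne_zero_iff.mpr
    intro i _
    exact_mod_cast (Nat.factorial_pos _).ne'
  have hFac : ((mu.sum.factorial : ℚ)) ≠ 0 := by
    exact_mod_cast (Nat.factorial_pos _).ne'
  have hDmu : DQ m (fun i => (mu.getD i 0 : ℚ)) ≠ 0 := DQ_ne_zero m _ hfpos hfsort
  have hn0 : ((mu.sum : ℚ) + 1) ≠ 0 := by positivity
  constructor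
  · intro k hk1 hk2 hsl
    have hk' : k - 1 < m := by omega
    set lam := mu.set (k - 1) (mu.getD (k - 1) 0 + 1) with hlamdef
    have hlen : lam.length = m := by rw [hlamdef, List.length_set]
    have hgkN : lam.getD (k - 1) 0 = mu.getD (k - 1) 0 + 1 := by
      simp only [hlamdef]
      rw [List.getD_eq_getElem _ 0 (by simpa using hk')]
      simp [List.getElem_set, List.getD_eq_getElem mu 0 hk']
    have hgiN : ∀ i, i ≠ k - 1 → lam.getD i 0 = mu.getD i 0 := by
      intro i hi
      by_cases h : i < m
      · simp only [hlamdef]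
        rw [List.getD_eq_getElem _ 0 (by simpa using h), List.getD_eq_getElem mu 0 h]
        simp [List.getElem_set, Ne.symm hi]
      · rw [List.getD_eq_default lam 0 (by omega), List.getD_eq_default mu 0 (by omega)]
    have hslN : ∀ i j, i < j → j < m → lam.getD j 0 < lam.getD i 0 := by
      intro i j hij hj
      rw [List.getD_eq_getElem lam 0 (by omega : j < lam.length),
        List.getD_eq_getElem lam 0 (by omega : i < lam.length)]
      exact List.pairwise_iff_getElem.mp hsl i j _ _ hij
    have hsum : lam.sum = mu.sum + 1 := by
      rw [list_sum_range lam, list_sum_range mu, hlen, ← hmdef]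
      have h1 : ∀ i ∈ Finset.range m, lam.getD i 0
          = mu.getD i 0 + (if i = k - 1 then 1 else 0) := by
        intro i _
        by_cases h : i = k - 1
        · rw [if_pos h, h, hgkN]
        · rw [if_neg h, hgiN i h]; simp
      rw [Finset.sum_congr rfl h1, Finset.sum_add_distrib, Finset.sum_ite_eq',
        if_pos (Finset.mem_range.mpr hk')]
    have hfact : (∏ i ∈ Finset.range m, ((lam.getD i 0).factorial : ℚ))
        = ((mu.getD (k - 1) 0 : ℚ) + 1) * ∏ i ∈ Finset.range m, ((mu.getD i 0).factorial : ℚ) := by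
      rw [← Finset.mul_prod_erase (Finset.range m)
          (fun i => ((lam.getD i 0).factorial : ℚ)) (Finset.mem_range.mpr hk'),
        ← Finset.mul_prod_erase (Finset.range m)
          (fun i => ((mu.getD i 0).factorial : ℚ)) (Finset.mem_range.mpr hk')]
      have herase : ∏ i ∈ (Finset.range m).erase (k - 1), ((lam.getD i 0).factorial : ℚ)
          = ∏ i ∈ (Finset.range m).erase (k - 1), ((mu.getD i 0).factorial : ℚ) := by
        apply Finset.prod_congr rfl
        intro i hi
        rw [hgiN i (Finset.ne_of_mem_erase hi)]
      rw [herase, hgkN, Nat.factorial_succ]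
      push_cast
      ring
    have hgpos : ∀ i, i < m → 0 < ((lam.getD i 0 : ℚ)) := by
      intro i hi
      by_cases h : i = k - 1
      · rw [h, hgkN]; positivity
      · rw [hgiN i h]; exact hfpos i hi
    have hgsort : ∀ i j, i < j → j < m → ((lam.getD j 0 : ℚ)) < (lam.getD i 0 : ℚ) := by
      intro i j hij hj; exact_mod_cast hslN i j hij hj
    have hDg : DQ m (fun i => (lam.getD i 0 : ℚ)) ≠ 0 := DQ_ne_zero m _ hgpos hgsort
    have hkey : (∏ a ∈ Finset.range m, (if a = k - 1 then 1 else
          ((mu.getD (k - 1) 0 : ℚ) * ((mu.getD (k - 1) 0 : ℚ) + 1)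
              - (mu.getD a 0 : ℚ) * ((mu.getD a 0 : ℚ) + 1)) /
            ((mu.getD (k - 1) 0 : ℚ) * ((mu.getD (k - 1) 0 : ℚ) + 1)
              - (mu.getD a 0 : ℚ) * ((mu.getD a 0 : ℚ) - 1)))) *
        DQ m (fun i => (lam.getD i 0 : ℚ)) = DQ m (fun i => (mu.getD i 0 : ℚ)) := by
      apply key1 m (k - 1) hk' (fun i => (mu.getD i 0 : ℚ)) (fun i => (lam.getD i 0 : ℚ))
      · show ((lam.getD (k - 1) 0 : ℚ)) = (mu.getD (k - 1) 0 : ℚ) + 1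
        rw [hgkN]; push_cast; ring
      · intro i hi
        show ((lam.getD i 0 : ℚ)) = (mu.getD i 0 : ℚ)
        rw [hgiN i hi]
      · exact hfpos
      · intro a ha hka
        exact hfsort (k - 1) a hka ha
      · intro a ha
        have h1 : lam.getD (k - 1) 0 < lam.getD a 0 := hslN a (k - 1) ha hk'
        rw [hgkN, hgiN a (ne_of_lt ha)] at h1
        show ((mu.getD (k - 1) 0 : ℚ)) + 1 < (mu.getD a 0 : ℚ)
        exact_mod_cast h1
    rw [gQ_eq mu, gQ_eq lam, hlen, hsum, hfact, Nat.factorial_succ, Nat.cast_mul,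
      Nat.cast_succ, ← hmdef, ← hkey]
    have hck1 : ((mu.getD (k - 1) 0 : ℚ)) + 1 ≠ 0 := by
      have := hfpos (k - 1) hk'; positivity
    set Q := ∏ a ∈ Finset.range m, (if a = k - 1 then 1 else
          ((mu.getD (k - 1) 0 : ℚ) * ((mu.getD (k - 1) 0 : ℚ) + 1)
              - (mu.getD a 0 : ℚ) * ((mu.getD a 0 : ℚ) + 1)) /
            ((mu.getD (k - 1) 0 : ℚ) * ((mu.getD (k - 1) 0 : ℚ) + 1)
              - (mu.getD a 0 : ℚ) * ((mu.getD a 0 : ℚ) - 1))) with hQdef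
    set Dg := DQ m (fun i => (lam.getD i 0 : ℚ)) with hDgdef
    set P := ∏ i ∈ Finset.range m, ((mu.getD i 0).factorial : ℚ) with hPdef
    set F := ((mu.sum.factorial : ℚ)) with hFdef
    set S := ((mu.sum : ℚ)) with hSdef
    field_simp
  · intro h2
    set lam := mu ++ [1] with hlamdef
    have hlen : lam.length = m + 1 := by simp [hlamdef, hmdef]
    have hgiN : ∀ i, i < m → lam.getD i 0 = mu.getD i 0 := by
      intro i hi
      simp only [hlamdef]
      exact List.getD_append mu [1] 0 i hi
    have hgm : lam.getD m 0 = 1 := by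
      simp only [hlamdef]
      rw [List.getD_eq_getElem _ 0 (by simp [hmdef])]
      simp [hmdef]
    have hsum : lam.sum = mu.sum + 1 := by simp [hlamdef]
    have hfact : (∏ i ∈ Finset.range (m + 1), ((lam.getD i 0).factorial : ℚ))
        = ∏ i ∈ Finset.range m, ((mu.getD i 0).factorial : ℚ) := by
      rw [Finset.prod_range_succ, hgm]
      simp only [Nat.factorial_one, Nat.cast_one, mul_one]
      apply Finset.prod_congr rfl
      intro i hi
      rw [hgiN i (Finset.mem_range.mp hi)]
    have hge2 : ∀ a, a < m → (2 : ℚ) ≤ (mu.getD a 0 : ℚ) := by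
      intro a ha
      have h3 : 2 ≤ mu.getD a 0 := by
        rcases eq_or_lt_of_le (by omega : a ≤ m - 1) with h | h
        · rw [h]; exact h2
        · exact le_trans h2 (le_of_lt (hsN a (m - 1) h (by omega)))
      exact_mod_cast h3
    have hD2 : DQ (m + 1) (fun i => (lam.getD i 0 : ℚ))
        = DQ m (fun i => (mu.getD i 0 : ℚ)) *
          ∏ i ∈ Finset.range m, ((mu.getD i 0 : ℚ) - 1) / ((mu.getD i 0 : ℚ) + 1) := by
      apply DQ_succ m (fun i => (mu.getD i 0 : ℚ)) (fun i => (lam.getD i 0 : ℚ))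
      · intro i hi
        show ((lam.getD i 0 : ℚ)) = (mu.getD i 0 : ℚ)
        rw [hgiN i hi]
      · show ((lam.getD m 0 : ℚ)) = 1
        rw [hgm]; norm_num
    have hcancel : (∏ a ∈ Finset.range m, ((mu.getD a 0 : ℚ) + 1) / ((mu.getD a 0 : ℚ) - 1)) *
        (∏ i ∈ Finset.range m, ((mu.getD i 0 : ℚ) - 1) / ((mu.getD i 0 : ℚ) + 1)) = 1 := by
      rw [← Finset.prod_mul_distrib]
      apply Finset.prod_eq_one
      intro a ha
      have h3 := hge2 a (Finset.mem_range.mp ha)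
      have h4 : ((mu.getD a 0 : ℚ)) - 1 ≠ 0 := by
        intro h; rw [sub_eq_zero] at h; rw [h] at h3; norm_num at h3
      have h5 : ((mu.getD a 0 : ℚ)) + 1 ≠ 0 := by
        intro h; nlinarith
      rw [div_mul_div_comm, mul_comm ((mu.getD a 0 : ℚ) + 1) ((mu.getD a 0 : ℚ) - 1),
        div_self (mul_ne_zero h4 h5)]
    have hE : (∏ i ∈ Finset.range m, ((mu.getD i 0 : ℚ) - 1) / ((mu.getD i 0 : ℚ) + 1)) ≠ 0 := by
      intro h
      rw [h, mul_zero] at hcancel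
      exact zero_ne_one hcancel
    have hQE : (∏ a ∈ Finset.range m, ((mu.getD a 0 : ℚ) + 1) / ((mu.getD a 0 : ℚ) - 1))
        = (∏ i ∈ Finset.range m, ((mu.getD i 0 : ℚ) - 1) / ((mu.getD i 0 : ℚ) + 1))⁻¹ :=
      eq_inv_of_mul_eq_one_left hcancel
    rw [gQ_eq mu, gQ_eq lam, hlen, hsum, hfact, hD2, Nat.factorial_succ, Nat.cast_mul,
      Nat.cast_succ, ← hmdef, hQE]
    set E := ∏ i ∈ Finset.range m, ((mu.getD i 0 : ℚ) - 1) / ((mu.getD i 0 : ℚ) + 1) with hEdef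
    set Df := DQ m (fun i => (mu.getD i 0 : ℚ)) with hDfdef
    set P := ∏ i ∈ Finset.range m, ((mu.getD i 0).factorial : ℚ) with hPdef
    set F := ((mu.sum.factorial : ℚ)) with hFdef
    set S := ((mu.sum : ℚ)) with hSdef
    field_simp
end
end
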